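/- arXiv:2111.01647 — 4 statements merged into one kernel-verified Lean document; each statement's English description precedes it below -/
import Mathlib

section
/- Let x ∈ ℝ^{|K|−1} be a point of differentiability of f := v^e∘T. Then there exist σ ∈ Δ(I) and τ ∈ Δ(J) such that, writing w = (σ M^k τ)_{k∈K} ∈ ℝ^K for the row vector of payoffs of (σ,τ) in each state: (A) ∇f(x) = w S (pre-multiplication of the matrix S by the row vector w), and (B) w · T(x) = f(x). -/
open scoped BigOperators
open Finset

noncomputable section

/-- Value of the zero-sum matrix game with payoff matrix `M`:
`min_{t ∈ Δ(J)} max_{s ∈ Δ(I)} s M t`. -/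
def matrixValue {I J : Type*} [Fintype I] [Fintype J] (M : I → J → ℝ) : ℝ :=
  ⨅ t : (stdSimplex ℝ J), ⨆ s : (stdSimplex ℝ I),
    ∑ i, ∑ j, (s : I → ℝ) i * M i j * (t : J → ℝ) j

/-- The non-revealing value function `v^e(q)`, defined on all of `ℝ^K`. -/
def ve {K I J : Type*} [Fintype K] [Fintype I] [Fintype J]
    (M : K → I → J → ℝ) (q : K → ℝ) : ℝ :=
  matrixValue (fun i j => ∑ k, q k * M k i j)

/-- The concavification `Cav(v)(p)`: pointwise smallest concave majorant of `v` on the simplex. -/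
def cav {K : Type*} [Fintype K] (v : (K → ℝ) → ℝ) (p : K → ℝ) : ℝ :=
  sInf { y : ℝ | ∃ g : (K → ℝ) → ℝ,
    ConcaveOn ℝ (stdSimplex ℝ K) g ∧ (∀ q ∈ stdSimplex ℝ K, v q ≤ g q) ∧ y = g p }

/-- The affine parametrization `T : ℝ^{|K|-1} → ℝ^K`, `T 0 = e₁`, `T eᵢ = e_{i+1}`. -/
def Tmap (n : ℕ) (x : Fin n → ℝ) : Fin (n + 1) → ℝ :=
  Fin.cons (1 - ∑ i, x i) x

/-- The inverse of `T` on the affine hull of the simplex. -/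
def Tinv {n : ℕ} (p : Fin (n + 1) → ℝ) : Fin n → ℝ := fun i => p i.succ

/-- Pre-multiplication of the matrix `S` (linear part of `T`) by the row vector `φ`. -/
def rowS (n : ℕ) (φ : Fin (n + 1) → ℝ) : Fin n → ℝ := fun i => φ i.succ - φ 0

/-- Gradient of `f : ℝⁿ → ℝ` as a vector. -/
def grad {n : ℕ} (f : (Fin n → ℝ) → ℝ) (x : Fin n → ℝ) : Fin n → ℝ :=
  fun i => fderiv ℝ f x (Pi.single i 1)

/-- Clarke generalized gradient of `f` at `x`. -/
def clarkeGrad {n : ℕ} (f : (Fin n → ℝ) → ℝ) (x : Fin n → ℝ) : Set (Fin n → ℝ) :=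
  convexHull ℝ { L : Fin n → ℝ | ∃ u : ℕ → Fin n → ℝ,
    (∀ m, DifferentiableAt ℝ f (u m)) ∧
    Filter.Tendsto u Filter.atTop (nhds x) ∧
    Filter.Tendsto (fun m => grad f (u m)) Filter.atTop (nhds L) }

/-- The restricted superdifferential `∂*Cav(v)(p)`. -/
def restrictedSuperdiff {n : ℕ} (Cv : (Fin (n + 1) → ℝ) → ℝ) (p : Fin (n + 1) → ℝ) :
    Set (Fin n → ℝ) :=
  { w | ∀ h : Fin n → ℝ, Tmap n (Tinv p + h) ∈ stdSimplex ℝ (Fin (n + 1)) →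
      Cv (Tmap n (Tinv p + h)) ≤ Cv p + ∑ i, w i * h i }

/-- Property `NR` at `p⁰`. -/
def propNR {n : ℕ} {I J : Type*} [Fintype I] [Fintype J]
    (M : Fin (n + 1) → I → J → ℝ) (p0 : Fin (n + 1) → ℝ) : Prop :=
  ∃ p ∈ stdSimplex ℝ (Fin (n + 1)), ∃ φ : Fin (n + 1) → ℝ,
    (cav (ve M) p = ve M p ∧ ve M p = ∑ k, φ k * p k ∧
      cav (ve M) p0 = ∑ k, φ k * p0 k) ∧
    rowS n φ ∈ clarkeGrad (fun x => ve M (Tmap n x)) (Tinv p) ∧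
    rowS n φ ∈ restrictedSuperdiff (cav (ve M)) p

/-- The set `F` of feasible payoff vectors. -/
def Fset {K I J : Type*} [Fintype K] [Fintype I] [Fintype J]
    (M : K → I → J → ℝ) : Set (K → ℝ) :=
  convexHull ℝ { w : K → ℝ | ∃ i : I, ∃ j : J, w = fun k => M k i j }

/-- The set of non-revealing equilibrium payoffs `NR(p⁰)`. -/
def NRset {K I J : Type*} [Fintype K] [Fintype I] [Fintype J]
    (M : K → I → J → ℝ) (p0 : K → ℝ) : Set (K → ℝ) :=
  { φ | (∀ q ∈ stdSimplex ℝ K, ve M q ≤ ∑ k, φ k * q k) ∧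
        (∑ k, φ k * p0 k = cav (ve M) p0) ∧ φ ∈ Fset M }

/-- The game is locally non-revealing at `p`. -/
def locallyNR {K I J : Type*} [Fintype K] [Fintype I] [Fintype J]
    (M : K → I → J → ℝ) (p : K → ℝ) : Prop :=
  ∃ m : ℕ, ∃ α : Fin m → ℝ, ∃ ps : Fin m → K → ℝ,
    (∀ i, 0 < α i) ∧ (∑ i, α i = 1) ∧ (∀ i, ps i ∈ stdSimplex ℝ K) ∧
    (∑ i, α i • ps i = p) ∧ (cav (ve M) p = ∑ i, α i * ve M (ps i)) ∧
    (∃ i₀, ∀ k, 0 < ps i₀ k)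

end

section MyAux
open Filter Topology
variable {I J : Type*} [Fintype I] [Fintype J] [Nonempty I] [Nonempty J]


private lemma stdSimplex_nonempty' (K : Type*) [Fintype K] [Nonempty K] :
    (stdSimplex ℝ K).Nonempty := by
  classical
  exact ⟨Pi.single (Classical.arbitrary K) 1, single_mem_stdSimplex ℝ _⟩

private lemma sup_simplex_eq (c : I → ℝ) :
    (⨆ s : (stdSimplex ℝ I), ∑ i, (s : I → ℝ) i * c i)
      = univ.sup' univ_nonempty c := by
  classical
  haveI : Nonempty (stdSimplex ℝ I) := (stdSimplex_nonempty' I).to_subtype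
  have hub : ∀ s : (stdSimplex ℝ I),
      ∑ i, (s : I → ℝ) i * c i ≤ univ.sup' univ_nonempty c := by
    intro s
    obtain ⟨hs0, hs1⟩ := s.2
    calc ∑ i, (s : I → ℝ) i * c i
        ≤ ∑ i, (s : I → ℝ) i * univ.sup' univ_nonempty c :=
          Finset.sum_le_sum fun i _ =>
            mul_le_mul_of_nonneg_left (Finset.le_sup' c (mem_univ i)) (hs0 i)
      _ = univ.sup' univ_nonempty c := by rw [← Finset.sum_mul, show ∑ i, (s : I → ℝ) i = 1 from hs1, one_mul]
  refine le_antisymm (ciSup_le hub) ?_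
  obtain ⟨i0, -, hi0⟩ := Finset.exists_mem_eq_sup' (univ_nonempty) c
  rw [hi0]
  have hmem : (Pi.single i0 1 : I → ℝ) ∈ stdSimplex ℝ I := single_mem_stdSimplex ℝ i0
  have hval : c i0 = ∑ i, (Pi.single i0 1 : I → ℝ) i * c i := by
    rw [Finset.sum_eq_single i0]
    · simp
    · intro i _ hne'; rw [Pi.single_eq_of_ne hne', zero_mul]
    · intro h; exact absurd (mem_univ i0) h
  rw [hval]
  exact le_ciSup ⟨univ.sup' univ_nonempty c, by rintro y ⟨s, rfl⟩; exact hub s⟩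
    (⟨_, hmem⟩ : (stdSimplex ℝ I))

private lemma matrixValue_eq_inf (M' : I → J → ℝ) :
    matrixValue M' = ⨅ t : (stdSimplex ℝ J),
      univ.sup' univ_nonempty (fun i => ∑ j, M' i j * (t : J → ℝ) j) := by
  unfold matrixValue
  refine iInf_congr fun t => ?_
  rw [← sup_simplex_eq (fun i => ∑ j, M' i j * (t : J → ℝ) j)]
  refine iSup_congr fun s => ?_
  refine Finset.sum_congr rfl fun i _ => ?_
  rw [Finset.mul_sum]
  exact Finset.sum_congr rfl fun j _ => by ring

private lemma matrixValue_exists_min (M' : I → J → ℝ) :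
    ∃ τ ∈ stdSimplex ℝ J, ∀ t ∈ stdSimplex ℝ J,
        univ.sup' univ_nonempty (fun i => ∑ j, M' i j * τ j)
          ≤ univ.sup' univ_nonempty (fun i => ∑ j, M' i j * t j) := by
  have hcont : Continuous
      (fun t : J → ℝ => univ.sup' univ_nonempty (fun i => ∑ j, M' i j * t j)) :=
    Continuous.finset_sup'_apply univ_nonempty fun i _ =>
      continuous_finset_sum _ fun j _ => continuous_const.mul (continuous_apply j)
  obtain ⟨τ, hτ, hmin⟩ := (isCompact_stdSimplex ℝ J).exists_isMinOn
    (stdSimplex_nonempty' J) hcont.continuousOn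
  exact ⟨τ, hτ, fun t ht => isMinOn_iff.mp hmin t ht⟩

private lemma matrixValue_le (M' : I → J → ℝ) {t : J → ℝ} (ht : t ∈ stdSimplex ℝ J) :
    matrixValue M' ≤ univ.sup' univ_nonempty (fun i => ∑ j, M' i j * t j) := by
  haveI : Nonempty (stdSimplex ℝ J) := (stdSimplex_nonempty' J).to_subtype
  obtain ⟨τ, hτ, hmin⟩ := matrixValue_exists_min M'
  rw [matrixValue_eq_inf]
  exact ciInf_le ⟨_, by rintro y ⟨t', rfl⟩; exact hmin t' t'.2⟩
    (⟨t, ht⟩ : (stdSimplex ℝ J))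

private lemma matrixValue_attained (M' : I → J → ℝ) :
    ∃ τ ∈ stdSimplex ℝ J,
      matrixValue M' = univ.sup' univ_nonempty (fun i => ∑ j, M' i j * τ j) := by
  haveI : Nonempty (stdSimplex ℝ J) := (stdSimplex_nonempty' J).to_subtype
  obtain ⟨τ, hτ, hmin⟩ := matrixValue_exists_min M'
  refine ⟨τ, hτ, le_antisymm (matrixValue_le M' hτ) ?_⟩
  rw [matrixValue_eq_inf]
  exact le_ciInf fun t => hmin t t.2

private lemma clm_apply_eq_sum {n : ℕ} (ℓ : (Fin n → ℝ) →L[ℝ] ℝ) (v : Fin n → ℝ) :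
    ℓ v = ∑ j, v j * ℓ (Pi.single j 1) := by
  classical
  have hv : v = ∑ j : Fin n, v j • (Pi.single j 1 : Fin n → ℝ) := by
    funext k
    rw [Finset.sum_apply, Finset.sum_eq_single k]
    · simp
    · intro j _ hne
      simp [Pi.single_eq_of_ne (Ne.symm hne)]
    · intro h; exact absurd (mem_univ k) h
  calc ℓ v = ℓ (∑ j, v j • (Pi.single j 1 : Fin n → ℝ)) := by rw [← hv]
    _ = ∑ j, v j * ℓ (Pi.single j 1) := by
        rw [map_sum]
        exact Finset.sum_congr rfl fun j _ => by rw [map_smul, smul_eq_mul]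

private lemma core_lemma {n : ℕ} {I : Type*} [Fintype I] [Nonempty I]
    (f : (Fin n → ℝ) → ℝ) (x : Fin n → ℝ) (hdiff : DifferentiableAt ℝ f x)
    (a : I → (Fin n → ℝ) → ℝ) (g : I → Fin n → ℝ)
    (haff : ∀ i y, a i y = a i x + ∑ j, g i j * (y j - x j))
    (hub : ∀ y, f y ≤ univ.sup' univ_nonempty (fun i => a i y))
    (heq : f x = univ.sup' univ_nonempty (fun i => a i x)) :
    ∃ σ : I → ℝ, σ ∈ stdSimplex ℝ I ∧
      (∀ i, σ i ≠ 0 → a i x = f x) ∧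
      (∀ j, fderiv ℝ f x (Pi.single j 1) = ∑ i, σ i * g i j) := by
  classical
  have hax_le : ∀ i, a i x ≤ f x := by
    intro i
    rw [heq]
    exact Finset.le_sup' (fun i => a i x) (mem_univ i)
  set A : Finset I := univ.filter (fun i => a i x = f x) with hAdef
  have hA : A.Nonempty := by
    obtain ⟨i0, -, hi0⟩ := Finset.exists_mem_eq_sup' (univ_nonempty) (fun i => a i x)
    exact ⟨i0, Finset.mem_filter.2 ⟨mem_univ _, (heq.trans hi0).symm⟩⟩
  have hstep : ∀ (i : I) (t : ℝ) (d : Fin n → ℝ),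
      a i (x + t • d) = a i x + t * ∑ j, g i j * d j := by
    intro i t d
    rw [haff i (x + t • d)]
    have h1 : ∑ j, g i j * ((x + t • d) j - x j) = ∑ j, t * (g i j * d j) :=
      Finset.sum_congr rfl fun j _ => by
        simp only [Pi.add_apply, Pi.smul_apply, smul_eq_mul]; ring
    rw [h1, ← Finset.mul_sum]
  -- Step 1 : directional derivative bound
  have hstep1 : ∀ d : Fin n → ℝ,
      fderiv ℝ f x d ≤ A.sup' hA (fun i => ∑ j, g i j * d j) := by
    intro d
    set Mx := A.sup' hA (fun i => ∑ j, g i j * d j) with hMx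
    have ht0 : ∃ t0 > (0:ℝ), ∀ t : ℝ, 0 < t → t ≤ t0 → f (x + t • d) ≤ f x + t * Mx := by
      refine ⟨univ.inf' univ_nonempty (fun i =>
        if a i x = f x then 1 else (f x - a i x) / (|(∑ j, g i j * d j) - Mx| + 1)), ?_, ?_⟩
      · rw [gt_iff_lt, Finset.lt_inf'_iff]
        intro i _
        split_ifs with h
        · exact one_pos
        · exact div_pos (sub_pos.2 (lt_of_le_of_ne (hax_le i) h)) (by positivity)
      · intro t ht htle
        refine le_trans (hub _) (Finset.sup'_le _ _ fun i _ => ?_)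
        rw [hstep]
        by_cases hi : a i x = f x
        · have hiA : i ∈ A := Finset.mem_filter.2 ⟨mem_univ _, hi⟩
          have hle : (∑ j, g i j * d j) ≤ Mx :=
            Finset.le_sup' (fun i => ∑ j, g i j * d j) hiA
          have := mul_le_mul_of_nonneg_left hle ht.le
          linarith
        · have h2 : t ≤ (f x - a i x) / (|(∑ j, g i j * d j) - Mx| + 1) := by
            refine le_trans htle (le_trans (Finset.inf'_le _ (mem_univ i)) ?_)
            rw [if_neg hi]
          have hpos : (0:ℝ) < |(∑ j, g i j * d j) - Mx| + 1 := by positivity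
          have h3 : t * (|(∑ j, g i j * d j) - Mx| + 1) ≤ f x - a i x := by
            rw [← le_div_iff₀ hpos]; exact h2
          have h4 : t * ((∑ j, g i j * d j) - Mx) ≤ t * |(∑ j, g i j * d j) - Mx| :=
            mul_le_mul_of_nonneg_left (le_abs_self _) ht.le
          have h5 : t * ((∑ j, g i j * d j) - Mx)
              = t * (∑ j, g i j * d j) - t * Mx := by ring
          have h6 : t * (|(∑ j, g i j * d j) - Mx| + 1)
              = t * |(∑ j, g i j * d j) - Mx| + t := by ring
          linarith
    obtain ⟨t0, ht0pos, hbound⟩ := ht0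
    have h2 : HasDerivAt (fun t : ℝ => x + t • d) d 0 := by
      simpa using ((hasDerivAt_id (0 : ℝ)).smul_const d).const_add x
    have h1 : HasFDerivAt f (fderiv ℝ f x) ((fun t : ℝ => x + t • d) 0) := by
      simpa using hdiff.hasFDerivAt
    have hphi : HasDerivAt (fun t : ℝ => f (x + t • d)) (fderiv ℝ f x d) 0 := by
      exact h1.comp_hasDerivAt 0 h2
    have hslope := hasDerivAt_iff_tendsto_slope.mp hphi
    have hslope' : Tendsto (slope (fun t : ℝ => f (x + t • d)) 0) (𝓝[>] (0:ℝ))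
        (𝓝 (fderiv ℝ f x d)) :=
      hslope.mono_left (nhdsWithin_mono 0 fun y hy => by
        simpa using (ne_of_gt hy))
    refine le_of_tendsto hslope' ?_
    filter_upwards [Ioc_mem_nhdsGT ht0pos] with t ht
    have hzero : x + (0:ℝ) • d = x := by simp
    have hb := hbound t ht.1 ht.2
    rw [slope_def_field]
    show (f (x + t • d) - f (x + (0:ℝ) • d)) / (t - 0) ≤ Mx
    rw [hzero, sub_zero, div_le_iff₀ ht.1]
    have hcm : t * Mx = Mx * t := mul_comm _ _
    linarith
  -- Step 2 : separation
  set L : Fin n → ℝ := fun j => fderiv ℝ f x (Pi.single j 1) with hLdef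
  let S : Set (I → ℝ) := stdSimplex ℝ I ∩ {σ | ∀ i, i ∉ A → σ i = 0}
  let Φ : (I → ℝ) →ₗ[ℝ] (Fin n → ℝ) :=
    { toFun := fun σ j => ∑ i, σ i * g i j
      map_add' := fun σ σ' => by
        funext j
        simp [add_mul, Finset.sum_add_distrib]
      map_smul' := fun r σ => by
        funext j
        simp [Finset.mul_sum, mul_assoc] }
  have hPhicont : Continuous Φ :=
    continuous_pi fun j => continuous_finset_sum _ fun i _ =>
      (continuous_apply i).mul continuous_const
  have hSconv : Convex ℝ S := by
    refine (convex_stdSimplex ℝ I).inter ?_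
    intro σ hσ σ' hσ' p q hp hq hpq i hi
    simp [hσ i hi, hσ' i hi]
  have hScl : IsClosed {σ : I → ℝ | ∀ i, i ∉ A → σ i = 0} := by
    have hrw : {σ : I → ℝ | ∀ i, i ∉ A → σ i = 0}
        = ⋂ i ∈ {i : I | i ∉ A}, {σ : I → ℝ | σ i = 0} := by
      ext σ; simp [Set.mem_iInter]
    rw [hrw]
    exact isClosed_biInter fun i _ => isClosed_eq (continuous_apply i) continuous_const
  have hScomp : IsCompact S := (isCompact_stdSimplex ℝ I).inter_right hScl
  have hCconv : Convex ℝ (Φ '' S) := hSconv.linear_image Φ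
  have hCcl : IsClosed (Φ '' S) := (hScomp.image hPhicont).isClosed
  have hLC : L ∈ Φ '' S := by
    by_contra hnot
    obtain ⟨ℓ, u, hlt, hgt⟩ := geometric_hahn_banach_closed_point hCconv hCcl hnot
    have hgi : ∀ i ∈ A, ∑ j, g i j * ℓ (Pi.single j 1) < u := by
      intro i hiA
      have hmem : (Pi.single i 1 : I → ℝ) ∈ S :=
        ⟨single_mem_stdSimplex ℝ i, fun i' hi' =>
          Pi.single_eq_of_ne (fun h => hi' (by rw [h]; exact hiA)) 1⟩
      have hPhi : Φ (Pi.single i 1) = g i := by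
        funext j
        show ∑ i', (Pi.single i 1 : I → ℝ) i' * g i' j = g i j
        rw [Finset.sum_eq_single i]
        · simp
        · intro i' _ hne'; rw [Pi.single_eq_of_ne hne', zero_mul]
        · intro h; exact absurd (mem_univ i) h
      have h := hlt _ ⟨_, hmem, rfl⟩
      rw [hPhi, clm_apply_eq_sum ℓ (g i)] at h
      exact h
    have hkey : fderiv ℝ f x (fun j => ℓ (Pi.single j 1))
        ≤ A.sup' hA (fun i => ∑ j, g i j * ℓ (Pi.single j 1)) :=
      hstep1 (fun j => ℓ (Pi.single j 1))
    have h1 : fderiv ℝ f x (fun j => ℓ (Pi.single j 1)) = ℓ L := by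
      rw [clm_apply_eq_sum (fderiv ℝ f x), clm_apply_eq_sum ℓ]
      exact Finset.sum_congr rfl fun j _ => mul_comm _ _
    have hsup : A.sup' hA (fun i => ∑ j, g i j * ℓ (Pi.single j 1)) < u :=
      (Finset.sup'_lt_iff hA).mpr hgi
    have hfin : ℓ L < u := h1 ▸ lt_of_le_of_lt hkey hsup
    exact absurd hgt (not_lt.2 hfin.le)
  obtain ⟨σ, ⟨hσs, hσz⟩, hσL⟩ := hLC
  refine ⟨σ, hσs, ?_, ?_⟩
  · intro i hne'
    by_contra hax
    exact hne' (hσz i (fun hiA => hax (Finset.mem_filter.mp hiA).2))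
  · intro j
    have h := congrFun hσL j
    exact h.symm
end MyAux


/-- at any differentiability point `x` of `f = v^e ∘ T` there are mixed
actions `σ ∈ Δ(I)`, `τ ∈ Δ(J)` with (A) `∇f(x) = w S` and (B) `w · T(x) = f(x)`,
where `w = (σ M^k τ)_{k∈K}`. -/
theorem stmt_1 {n : ℕ} {I J : Type*} [Fintype I] [Fintype J] [Nonempty I] [Nonempty J]
    (M : Fin (n + 1) → I → J → ℝ) (x : Fin n → ℝ)
    (hdiff : DifferentiableAt ℝ (fun y : Fin n → ℝ => ve M (Tmap n y)) x) :
    ∃ σ ∈ stdSimplex ℝ I, ∃ τ ∈ stdSimplex ℝ J,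
      grad (fun y : Fin n → ℝ => ve M (Tmap n y)) x
          = rowS n (fun k => ∑ i, ∑ j, σ i * M k i j * τ j) ∧
      ∑ k, (∑ i, ∑ j, σ i * M k i j * τ j) * Tmap n x k = ve M (Tmap n x) := by
  classical
  obtain ⟨τ, hτ, hval⟩ := matrixValue_attained (fun i j => ∑ k, Tmap n x k * M k i j)
  set c : I → Fin (n + 1) → ℝ := fun i k => ∑ j, M k i j * τ j with hc
  have hswap : ∀ (q : Fin (n + 1) → ℝ) (i : I),
      ∑ j, (∑ k, q k * M k i j) * τ j = ∑ k, q k * c i k := by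
    intro q i
    calc ∑ j, (∑ k, q k * M k i j) * τ j
        = ∑ j, ∑ k, q k * M k i j * τ j :=
          Finset.sum_congr rfl fun j _ => by rw [Finset.sum_mul]
      _ = ∑ k, ∑ j, q k * M k i j * τ j := Finset.sum_comm
      _ = ∑ k, q k * c i k := Finset.sum_congr rfl fun k _ => by
          rw [Finset.mul_sum]
          exact Finset.sum_congr rfl fun j _ => (mul_assoc _ _ _)
  set f : (Fin n → ℝ) → ℝ := fun y => ve M (Tmap n y) with hf
  set a : I → (Fin n → ℝ) → ℝ := fun i y => ∑ k, Tmap n y k * c i k with ha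
  set g : I → Fin n → ℝ := fun i m => c i m.succ - c i 0 with hg
  have haffq : ∀ (y : Fin n → ℝ) (i : I),
      a i y = c i 0 + ∑ m, g i m * y m := by
    intro y i
    show ∑ k, Tmap n y k * c i k = _
    rw [Fin.sum_univ_succ]
    simp only [Tmap, Fin.cons_zero, Fin.cons_succ]
    have h1 : ∑ m, g i m * y m
        = (∑ m, y m * c i m.succ) - c i 0 * ∑ m, y m := by
      rw [Finset.mul_sum, ← Finset.sum_sub_distrib]
      exact Finset.sum_congr rfl fun m _ => by show (c i m.succ - c i 0) * y m = _; ring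
    rw [h1]
    ring
  have haff : ∀ (i : I) (y : Fin n → ℝ), a i y = a i x + ∑ m, g i m * (y m - x m) := by
    intro i y
    rw [haffq y i, haffq x i]
    have : ∑ m, g i m * (y m - x m) = (∑ m, g i m * y m) - ∑ m, g i m * x m := by
      rw [← Finset.sum_sub_distrib]
      exact Finset.sum_congr rfl fun m _ => by ring
    rw [this]
    ring
  have hub : ∀ y, f y ≤ univ.sup' univ_nonempty (fun i => a i y) := by
    intro y
    have h1 : f y = matrixValue (fun i j => ∑ k, Tmap n y k * M k i j) := rfl
    rw [h1]
    refine le_trans (matrixValue_le _ hτ) (le_of_eq ?_)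
    congr 1
    funext i
    exact hswap (Tmap n y) i
  have heq : f x = univ.sup' univ_nonempty (fun i => a i x) := by
    have h1 : f x = matrixValue (fun i j => ∑ k, Tmap n x k * M k i j) := rfl
    rw [h1, hval]
    congr 1
    funext i
    exact hswap (Tmap n x) i
  obtain ⟨σ, hσ, hsupp, hgrad⟩ := core_lemma f x hdiff a g haff hub heq
  have hw : ∀ k, (∑ i, ∑ j, σ i * M k i j * τ j) = ∑ i, σ i * c i k := by
    intro k
    refine Finset.sum_congr rfl fun i _ => ?_
    rw [Finset.mul_sum]
    exact Finset.sum_congr rfl fun j _ => by ring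
  refine ⟨σ, hσ, τ, hτ, ?_, ?_⟩
  · funext m
    refine (hgrad m).trans ?_
    show ∑ i, σ i * g i m
        = (∑ i, ∑ j, σ i * M m.succ i j * τ j) - ∑ i, ∑ j, σ i * M 0 i j * τ j
    rw [hw m.succ, hw 0, ← Finset.sum_sub_distrib]
    refine Finset.sum_congr rfl fun i _ => ?_
    show σ i * (c i m.succ - c i 0) = _
    ring
  · have hswap2 : ∑ k, (∑ i, ∑ j, σ i * M k i j * τ j) * Tmap n x k
        = ∑ i, σ i * a i x := by
      calc ∑ k, (∑ i, ∑ j, σ i * M k i j * τ j) * Tmap n x k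
          = ∑ k, (∑ i, σ i * c i k) * Tmap n x k :=
            Finset.sum_congr rfl fun k _ => by rw [hw k]
        _ = ∑ k, ∑ i, σ i * c i k * Tmap n x k :=
            Finset.sum_congr rfl fun k _ => by rw [Finset.sum_mul]
        _ = ∑ i, ∑ k, σ i * c i k * Tmap n x k := Finset.sum_comm
        _ = ∑ i, σ i * a i x := Finset.sum_congr rfl fun i _ => by
            show _ = σ i * ∑ k, Tmap n x k * c i k
            rw [Finset.mul_sum]
            exact Finset.sum_congr rfl fun k _ => by ring
    rw [hswap2]
    have hterm : ∀ i, σ i * a i x = σ i * f x := by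
      intro i
      by_cases h : σ i = 0
      · rw [h, zero_mul, zero_mul]
      · rw [hsupp i h]
    rw [Finset.sum_congr rfl fun i _ => hterm i, ← Finset.sum_mul, hσ.2, one_mul]
end

section
/- Suppose the game satisfies property NR at p⁰ ∈ Δ(K), witnessed by p ∈ Δ(K) and φ ∈ ℝ^K. Then φ ∈ NR(p⁰); in particular NR(p⁰) is nonempty. -/
set_option linter.unusedSectionVars false
set_option maxHeartbeats 1000000


open scoped BigOperators
open Finset

noncomputable section

namespace NRaux

open Filter Topology

variable {I J : Type*} [Fintype I] [Fintype J]

def pay (A : I → J → ℝ) (s : I → ℝ) (t : J → ℝ) : ℝ := ∑ i, ∑ j, s i * A i j * t j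

lemma stdSimplex_nonneg {q : I → ℝ} (h : q ∈ stdSimplex ℝ I) (i : I) : 0 ≤ q i := h.1 i
lemma stdSimplex_sum {q : I → ℝ} (h : q ∈ stdSimplex ℝ I) : ∑ i, q i = 1 := h.2

lemma exists_entry_bound (M : I → J → ℝ) : ∃ c : ℝ, 0 ≤ c ∧ ∀ i j, |M i j| ≤ c := by
  refine ⟨∑ i, ∑ j, |M i j|, by positivity, fun i j => ?_⟩
  calc |M i j| ≤ ∑ j, |M i j| :=
        Finset.single_le_sum (f := fun j => |M i j|) (fun j _ => abs_nonneg _) (Finset.mem_univ j)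
    _ ≤ ∑ i, ∑ j, |M i j| :=
        Finset.single_le_sum (f := fun i => ∑ j, |M i j|)
          (fun i _ => Finset.sum_nonneg fun j _ => abs_nonneg _) (Finset.mem_univ i)

lemma pay_abs_le {A : I → J → ℝ} {c : ℝ} (hc : ∀ i j, |A i j| ≤ c)
    {s : I → ℝ} {t : J → ℝ} (hs : s ∈ stdSimplex ℝ I) (ht : t ∈ stdSimplex ℝ J) :
    |pay A s t| ≤ c := by
  have h1 : |pay A s t| ≤ ∑ i, ∑ j, s i * c * t j := by
    refine (Finset.abs_sum_le_sum_abs _ _).trans (Finset.sum_le_sum fun i _ => ?_)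
    refine (Finset.abs_sum_le_sum_abs _ _).trans (Finset.sum_le_sum fun j _ => ?_)
    rw [abs_mul, abs_mul, abs_of_nonneg (hs.1 i), abs_of_nonneg (ht.1 j)]
    have := hc i j
    have h0 : 0 ≤ s i := hs.1 i
    have h0' : 0 ≤ t j := ht.1 j
    nlinarith [mul_nonneg (mul_nonneg h0 (sub_nonneg.2 this)) h0']
  have h2 : ∑ i, ∑ j, s i * c * t j = c := by
    have : ∀ i, ∑ j, s i * c * t j = s i * c := by
      intro i; rw [← Finset.mul_sum, ht.2, mul_one]
    simp only [this, ← Finset.sum_mul, hs.2, one_mul]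
  linarith [h1, h2.le]

lemma stdSimplex_nonempty' [Nonempty I] : (stdSimplex ℝ I).Nonempty := by
  classical
  inhabit I
  refine ⟨Pi.single default 1, fun i => ?_, ?_⟩
  · rcases eq_or_ne i default with h | h <;> simp [Pi.single_apply, h]
  · simp

instance [Nonempty I] : Nonempty (stdSimplex ℝ I) :=
  Set.Nonempty.to_subtype stdSimplex_nonempty'

variable [Nonempty I] [Nonempty J]

def supPay (A : I → J → ℝ) (t : J → ℝ) : ℝ := ⨆ s : stdSimplex ℝ I, pay A ↑s t

lemma bddAbove_pay {A : I → J → ℝ} {c : ℝ} (hc : ∀ i j, |A i j| ≤ c)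
    {t : J → ℝ} (ht : t ∈ stdSimplex ℝ J) :
    BddAbove (Set.range fun s : stdSimplex ℝ I => pay A ↑s t) := by
  refine ⟨c, ?_⟩; rintro _ ⟨s, rfl⟩; exact (abs_le.1 (pay_abs_le hc s.2 ht)).2

lemma supPay_le {A : I → J → ℝ} {c : ℝ} (hc : ∀ i j, |A i j| ≤ c)
    {t : J → ℝ} (ht : t ∈ stdSimplex ℝ J) : supPay A t ≤ c :=
  ciSup_le fun s => (abs_le.1 (pay_abs_le hc s.2 ht)).2

lemma le_supPay {A : I → J → ℝ} {c : ℝ} (hc : ∀ i j, |A i j| ≤ c)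
    {t : J → ℝ} (ht : t ∈ stdSimplex ℝ J) : -c ≤ supPay A t := by
  obtain ⟨s, hs⟩ : Nonempty (stdSimplex ℝ I) := inferInstance
  calc -c ≤ pay A s t := (abs_le.1 (pay_abs_le hc hs ht)).1
    _ ≤ supPay A t := le_ciSup (bddAbove_pay hc ht) ⟨s, hs⟩

lemma matrixValue_eq (A : I → J → ℝ) :
    matrixValue A = ⨅ t : stdSimplex ℝ J, supPay A ↑t := rfl

lemma bddBelow_supPay {A : I → J → ℝ} {c : ℝ} (hc : ∀ i j, |A i j| ≤ c) :
    BddBelow (Set.range fun t : stdSimplex ℝ J => supPay A ↑t) := by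
  refine ⟨-c, ?_⟩; rintro _ ⟨t, rfl⟩; exact le_supPay hc t.2

lemma matrixValue_le_supPay {A : I → J → ℝ} {c : ℝ} (hc : ∀ i j, |A i j| ≤ c)
    (t : stdSimplex ℝ J) : matrixValue A ≤ supPay A ↑t := by
  rw [matrixValue_eq]; exact ciInf_le (bddBelow_supPay hc) t

lemma abs_matrixValue_le {A : I → J → ℝ} {c : ℝ} (hc : ∀ i j, |A i j| ≤ c) :
    |matrixValue A| ≤ c := by
  obtain ⟨t, ht⟩ : Nonempty (stdSimplex ℝ J) := inferInstance
  rw [abs_le]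
  constructor
  · rw [matrixValue_eq]; exact le_ciInf fun t => le_supPay hc t.2
  · exact (matrixValue_le_supPay hc ⟨t, ht⟩).trans (supPay_le hc ht)

lemma pay_sub (A A' : I → J → ℝ) (s : I → ℝ) (t : J → ℝ) :
    pay A s t - pay A' s t = pay (fun i j => A i j - A' i j) s t := by
  simp only [pay, ← Finset.sum_sub_distrib]; congr 1; ext i; congr 1; ext j; ring

lemma matrixValue_le_of_entry {A A' : I → J → ℝ} {c c' δ : ℝ}
    (hc : ∀ i j, |A i j| ≤ c) (hc' : ∀ i j, |A' i j| ≤ c')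
    (hd : ∀ i j, |A i j - A' i j| ≤ δ) :
    matrixValue A ≤ matrixValue A' + δ := by
  have key : ∀ t : stdSimplex ℝ J, matrixValue A - δ ≤ supPay A' ↑t := by
    intro t
    have h2 : supPay A ↑t ≤ supPay A' ↑t + δ := by
      refine ciSup_le fun s => ?_
      have := pay_abs_le hd (s := s) (t := t) s.2 t.2
      rw [← pay_sub] at this
      have h3 := le_ciSup (bddAbove_pay hc' (t := t) t.2) s
      have h4 := (abs_le.1 this).2
      simp only [supPay]
      linarith
    linarith [matrixValue_le_supPay hc t]
  have := le_ciInf key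
  rw [← matrixValue_eq] at this
  linarith

lemma abs_matrixValue_sub_le {A A' : I → J → ℝ} {c c' δ : ℝ}
    (hc : ∀ i j, |A i j| ≤ c) (hc' : ∀ i j, |A' i j| ≤ c')
    (hd : ∀ i j, |A i j - A' i j| ≤ δ) :
    |matrixValue A - matrixValue A'| ≤ δ := by
  have h1 := matrixValue_le_of_entry hc hc' hd
  have h2 := matrixValue_le_of_entry hc' hc (fun i j => by
    rw [abs_sub_comm]; exact hd i j)
  rw [abs_le]; constructor <;> linarith

variable {n : ℕ}

/-- T-algebra -/
lemma dot_Tmap (ψ : Fin (n+1) → ℝ) (x : Fin n → ℝ) :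
    ∑ k, ψ k * Tmap n x k = ψ 0 * (1 - ∑ i, x i) + ∑ i, ψ i.succ * x i := by
  rw [Fin.sum_univ_succ]
  simp [Tmap]

lemma dot_Tmap_add (ψ : Fin (n+1) → ℝ) (x z : Fin n → ℝ) :
    ∑ k, ψ k * Tmap n (x + z) k
      = ∑ k, ψ k * Tmap n x k + ∑ i, rowS n ψ i * z i := by
  simp only [dot_Tmap, rowS, Pi.add_apply, Finset.sum_add_distrib, mul_add, sub_mul,
    Finset.sum_sub_distrib, ← Finset.mul_sum]
  ring

lemma Tmap_Tinv {p : Fin (n+1) → ℝ} (hp : p ∈ stdSimplex ℝ (Fin (n+1))) :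
    Tmap n (Tinv p) = p := by
  have hs : p 0 + ∑ i : Fin n, p i.succ = 1 := by
    have h2 := hp.2
    rwa [Fin.sum_univ_succ] at h2
  funext k
  refine Fin.cases ?_ (fun i => ?_) k
  · show (1 - ∑ i, Tinv p i) = p 0
    simp only [Tinv]; linarith
  · simp [Tmap, Tinv]

/-- strategy payoff vector -/
def psiVec {K : Type*} [Fintype K] (M : K → I → J → ℝ) (s : I → ℝ) (t : J → ℝ) :
    K → ℝ := fun k => pay (M k) s t

lemma psiVec_mem_Fset {K : Type*} [Fintype K] (M : K → I → J → ℝ)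
    {s : I → ℝ} {t : J → ℝ} (hs : s ∈ stdSimplex ℝ I) (ht : t ∈ stdSimplex ℝ J) :
    psiVec M s t ∈ Fset M := by
  classical
  have hconv : Convex ℝ (Fset M) := convex_convexHull ℝ _
  have := hconv.sum_mem (t := (Finset.univ : Finset (I × J)))
    (w := fun p => s p.1 * t p.2) (z := fun p => fun k => M k p.1 p.2)
    (fun p _ => mul_nonneg (hs.1 p.1) (ht.1 p.2))
    (by rw [Fintype.sum_prod_type]
        simp only [← Finset.mul_sum, ht.2, mul_one]
        exact hs.2)
    (fun p _ => subset_convexHull ℝ _ ⟨p.1, p.2, rfl⟩)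
  convert this using 1
  funext k
  rw [Finset.sum_apply]
  rw [Fintype.sum_prod_type]
  simp only [psiVec, pay, Pi.smul_apply, smul_eq_mul]
  congr 1; funext i; congr 1; funext j; ring

lemma pay_Aq {K : Type*} [Fintype K] (M : K → I → J → ℝ) (q : K → ℝ)
    (s : I → ℝ) (t : J → ℝ) :
    pay (fun i j => ∑ k, q k * M k i j) s t = ∑ k, q k * psiVec M s t k := by
  have hterm : ∀ i j, s i * (∑ k, q k * M k i j) * t j
      = ∑ k, q k * (s i * M k i j * t j) := by
    intro i j
    rw [Finset.mul_sum, Finset.sum_mul]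
    exact Finset.sum_congr rfl fun k _ => by ring
  simp only [pay, psiVec]
  refine Eq.trans (Finset.sum_congr rfl fun i _ => Finset.sum_congr rfl fun j _ => hterm i j) ?_
  calc ∑ i, ∑ j, ∑ k, q k * (s i * M k i j * t j)
      = ∑ i, ∑ k, ∑ j, q k * (s i * M k i j * t j) :=
        Finset.sum_congr rfl fun i _ => Finset.sum_comm
    _ = ∑ k, ∑ i, ∑ j, q k * (s i * M k i j * t j) := Finset.sum_comm
    _ = ∑ k, q k * ∑ i, ∑ j, s i * M k i j * t j :=
        Finset.sum_congr rfl fun k _ => by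
          rw [Finset.mul_sum]
          exact Finset.sum_congr rfl fun i _ => (Finset.mul_sum _ _ _).symm



variable [Nonempty I] [Nonempty J]

lemma pay_diff_t {A : I → J → ℝ} {c : ℝ} (hc : ∀ i j, |A i j| ≤ c)
    {s : I → ℝ} (hs : s ∈ stdSimplex ℝ I) (t t' : J → ℝ) :
    |pay A s t - pay A s t'| ≤ c * ∑ j, |t j - t' j| := by
  have hlin : pay A s t - pay A s t' = ∑ i, ∑ j, s i * A i j * (t j - t' j) := by
    simp only [pay, ← Finset.sum_sub_distrib]
    congr 1; funext i; congr 1; funext j; ring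
  rw [hlin]
  have h1 : |∑ i, ∑ j, s i * A i j * (t j - t' j)|
      ≤ ∑ i, ∑ j, s i * (c * |t j - t' j|) := by
    refine (Finset.abs_sum_le_sum_abs _ _).trans (Finset.sum_le_sum fun i _ => ?_)
    refine (Finset.abs_sum_le_sum_abs _ _).trans (Finset.sum_le_sum fun j _ => ?_)
    rw [abs_mul, abs_mul, abs_of_nonneg (hs.1 i)]
    have h2 := hc i j
    have h0 : 0 ≤ s i := hs.1 i
    nlinarith [abs_nonneg (t j - t' j), abs_nonneg (A i j),
      mul_nonneg (mul_nonneg h0 (sub_nonneg.2 h2)) (abs_nonneg (t j - t' j))]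
  have h2 : ∑ i, ∑ j, s i * (c * |t j - t' j|) = c * ∑ j, |t j - t' j| := by
    simp only [← Finset.mul_sum]
    rw [← Finset.sum_mul, hs.2, one_mul]
  linarith


lemma supPay_diff_le {A : I → J → ℝ} {c cA : ℝ} (hcA : ∀ i j, |A i j| ≤ cA)
    (hc : ∀ i j, |A i j| ≤ c)
    {t t' : J → ℝ} (ht : t ∈ stdSimplex ℝ J) (ht' : t' ∈ stdSimplex ℝ J) :
    |supPay A t - supPay A t'| ≤ c * ∑ j, |t j - t' j| := by
  have key : ∀ u u' : J → ℝ, u ∈ stdSimplex ℝ J → u' ∈ stdSimplex ℝ J →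
      supPay A u - supPay A u' ≤ c * ∑ j, |u j - u' j| := by
    intro u u' hu hu'
    have h1 : supPay A u ≤ supPay A u' + c * ∑ j, |u j - u' j| := by
      refine ciSup_le fun s => ?_
      have hd := pay_diff_t hc (s := s) s.2 u u'
      have h3 := le_ciSup (bddAbove_pay hcA hu') s
      have := (abs_le.1 hd).2
      simp only [supPay] at h3 ⊢
      linarith
    linarith
  have h1 := key t t' ht ht'
  have h2 := key t' t ht' ht
  rw [abs_le]
  constructor
  · have : ∑ j, |t' j - t j| = ∑ j, |t j - t' j| :=
      Finset.sum_congr rfl fun j _ => abs_sub_comm _ _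
    rw [this] at h2; linarith
  · exact h1

lemma continuousOn_supPay {A : I → J → ℝ} {c : ℝ} (hc0 : 0 ≤ c)
    (hc : ∀ i j, |A i j| ≤ c) :
    ContinuousOn (supPay A) (stdSimplex ℝ J) := by
  classical
  rw [Metric.continuousOn_iff]
  intro t ht ε hε
  refine ⟨ε / (c * (Fintype.card J) + 1), by positivity, fun t' ht' hdist => ?_⟩
  have hsum : ∑ j, |t' j - t j| ≤ (Fintype.card J) * dist t' t := by
    calc ∑ j, |t' j - t j| ≤ ∑ _j : J, dist t' t := by
          refine Finset.sum_le_sum fun j _ => ?_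
          rw [← Real.dist_eq]
          exact dist_le_pi_dist t' t j
      _ = (Fintype.card J) * dist t' t := by
          rw [Finset.sum_const, Finset.card_univ, nsmul_eq_mul]
  have hd := supPay_diff_le hc hc ht' ht
  rw [Real.dist_eq]
  have hcd : c * ∑ j, |t' j - t j| ≤ c * ((Fintype.card J) * dist t' t) :=
    mul_le_mul_of_nonneg_left hsum hc0
  have hlt : c * ((Fintype.card J) * dist t' t) < ε := by
    have hdn : 0 ≤ dist t' t := dist_nonneg
    have h5 : (c * (Fintype.card J) + 1) * dist t' t < ε := by
      have := mul_lt_mul_of_pos_left hdist (show (0:ℝ) < c * (Fintype.card J) + 1 by positivity)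
      calc (c * (Fintype.card J) + 1) * dist t' t
          = (c * (Fintype.card J) + 1) * dist t' t := rfl
        _ < (c * (Fintype.card J) + 1) * (ε / (c * (Fintype.card J) + 1)) := by
            exact mul_lt_mul_of_pos_left hdist (by positivity)
        _ = ε := by field_simp
    nlinarith
  linarith [(abs_le.1 hd).2, abs_nonneg (supPay A t' - supPay A t)]

lemma exists_opt_t {A : I → J → ℝ} {c : ℝ} (hc0 : 0 ≤ c) (hc : ∀ i j, |A i j| ≤ c) :
    ∃ t ∈ stdSimplex ℝ J, matrixValue A = supPay A t := by
  obtain ⟨t, ht, hmin⟩ := (isCompact_stdSimplex ℝ J).exists_isMinOn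
    stdSimplex_nonempty' (continuousOn_supPay hc0 hc)
  refine ⟨t, ht, le_antisymm (matrixValue_le_supPay hc ⟨t, ht⟩) ?_⟩
  rw [matrixValue_eq]
  exact le_ciInf fun t' => hmin t'.2

lemma exists_opt_s (A : I → J → ℝ) {c : ℝ} (hc : ∀ i j, |A i j| ≤ c)
    {t : J → ℝ} (ht : t ∈ stdSimplex ℝ J) :
    ∃ s ∈ stdSimplex ℝ I, supPay A t = pay A s t := by
  have hcont : ContinuousOn (fun s => pay A s t) (stdSimplex ℝ I) := by
    refine Continuous.continuousOn ?_
    refine continuous_finset_sum _ fun i _ => continuous_finset_sum _ fun j _ => ?_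
    exact ((continuous_apply i).mul continuous_const).mul continuous_const
  obtain ⟨s, hs, hmax⟩ := (isCompact_stdSimplex ℝ I).exists_isMaxOn
    stdSimplex_nonempty' hcont
  refine ⟨s, hs, le_antisymm (ciSup_le fun s' => hmax s'.2) ?_⟩
  exact le_ciSup (bddAbove_pay hc ht) ⟨s, hs⟩


variable {K : Type*} [Fintype K]

lemma Aq_abs_le {M : K → I → J → ℝ} {c : ℝ} (hc : ∀ k i j, |M k i j| ≤ c)
    (q : K → ℝ) : ∀ i j, |∑ k, q k * M k i j| ≤ (∑ k, |q k|) * c := by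
  intro i j
  refine (Finset.abs_sum_le_sum_abs _ _).trans ?_
  rw [Finset.sum_mul]
  refine Finset.sum_le_sum fun k _ => ?_
  rw [abs_mul]
  exact mul_le_mul_of_nonneg_left (hc k i j) (abs_nonneg _)

lemma ve_eq_matrixValue (M : K → I → J → ℝ) (q : K → ℝ) :
    ve M q = matrixValue (fun i j => ∑ k, q k * M k i j) := rfl

lemma abs_ve_le {M : K → I → J → ℝ} {c : ℝ} (hc : ∀ k i j, |M k i j| ≤ c)
    (q : K → ℝ) : |ve M q| ≤ (∑ k, |q k|) * c :=
  abs_matrixValue_le (Aq_abs_le hc q)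

lemma ve_diff_le {M : K → I → J → ℝ} {c : ℝ} (hc : ∀ k i j, |M k i j| ≤ c)
    (q q' : K → ℝ) : |ve M q - ve M q'| ≤ (∑ k, |q k - q' k|) * c := by
  refine abs_matrixValue_sub_le (Aq_abs_le hc q) (Aq_abs_le hc q') ?_
  intro i j
  have h1 : (∑ k, q k * M k i j) - (∑ k, q' k * M k i j)
      = ∑ k, (q k - q' k) * M k i j := by
    rw [← Finset.sum_sub_distrib]
    exact Finset.sum_congr rfl fun k _ => by ring
  rw [h1]
  exact Aq_abs_le hc (fun k => q k - q' k) i j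

lemma ve_le_on_simplex {M : K → I → J → ℝ} {c : ℝ} (hc : ∀ k i j, |M k i j| ≤ c)
    {q : K → ℝ} (hq : q ∈ stdSimplex ℝ K) : ve M q ≤ c := by
  have h1 := (abs_le.1 (abs_ve_le hc q)).2
  have h2 : ∑ k, |q k| = 1 := by
    rw [← hq.2]; exact Finset.sum_congr rfl fun k _ => abs_of_nonneg (hq.1 k)
  rw [h2, one_mul] at h1; exact h1

lemma ve_le_cav (M : K → I → J → ℝ) {q : K → ℝ} (hq : q ∈ stdSimplex ℝ K) :
    ve M q ≤ cav (ve M) q := by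
  obtain ⟨c, hc0, hc⟩ : ∃ c : ℝ, 0 ≤ c ∧ ∀ k i j, |M k i j| ≤ c := by
    obtain ⟨c, hc0, hc⟩ := exists_entry_bound (fun p : K × I => fun j => M p.1 p.2 j)
    exact ⟨c, hc0, fun k i j => hc (k, i) j⟩
  refine le_csInf ⟨c, fun _ => c, concaveOn_const c (convex_stdSimplex ℝ K),
    fun q' hq' => ve_le_on_simplex hc hq', rfl⟩ ?_
  rintro y ⟨g, hg, hmaj, rfl⟩
  exact hmaj q hq

lemma ve_tendsto {M : K → I → J → ℝ} {c : ℝ} (hc : ∀ k i j, |M k i j| ≤ c)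
    {q : ℕ → K → ℝ} {p : K → ℝ} (hq : Filter.Tendsto q Filter.atTop (nhds p)) :
    Filter.Tendsto (fun m => ve M (q m)) Filter.atTop (nhds (ve M p)) := by
  rw [tendsto_iff_dist_tendsto_zero]
  have hbound : ∀ m, dist (ve M (q m)) (ve M p) ≤ (∑ k, |q m k - p k|) * c := by
    intro m; rw [Real.dist_eq]; exact ve_diff_le hc _ _
  have hz : Filter.Tendsto (fun m => (∑ k, |q m k - p k|) * c) Filter.atTop (nhds 0) := by
    have h0 : Filter.Tendsto (fun m => ∑ k, |q m k - p k|) Filter.atTop (nhds 0) := by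
      have h1 : ∀ k : K, Filter.Tendsto (fun m => |q m k - p k|) Filter.atTop (nhds 0) := by
        intro k
        have := (((tendsto_pi_nhds.1 hq) k).sub (tendsto_const_nhds (x := p k))).abs
        simpa using this
      have := tendsto_finset_sum (Finset.univ : Finset K) (fun k _ => h1 k)
      simpa using this
    simpa using h0.mul_const c
  exact squeeze_zero (fun m => dist_nonneg) hbound hz


/-- continuous linear map on pi type as a sum -/
lemma clm_apply_eq_sum {m : ℕ} (L : ((Fin m) → ℝ) →L[ℝ] ℝ) (y : Fin m → ℝ) :
    L y = ∑ i, y i * L (Pi.single i 1) := by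
  classical
  have hy : y = ∑ i, y i • (Pi.single i (1:ℝ) : Fin m → ℝ) := by
    funext j
    rw [Finset.sum_apply]
    simp only [Pi.smul_apply, Pi.single_apply, smul_eq_mul, mul_ite, mul_one, mul_zero]
    rw [Finset.sum_ite_eq Finset.univ j (fun i => y i)]
    simp
  conv_lhs => rw [hy]
  rw [map_sum]
  exact Finset.sum_congr rfl fun i _ => by rw [map_smul]; simp

lemma psiVec_smul_add {K : Type*} [Fintype K] (M : K → I → J → ℝ) (a b : ℝ)
    (s1 s2 : I → ℝ) (t : J → ℝ) :
    psiVec M (a • s1 + b • s2) t = a • psiVec M s1 t + b • psiVec M s2 t := by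
  funext k
  simp only [psiVec, pay, Pi.add_apply, Pi.smul_apply, smul_eq_mul, Finset.mul_sum,
    ← Finset.sum_add_distrib]
  refine Finset.sum_congr rfl fun i _ => ?_
  refine Finset.sum_congr rfl fun j _ => ?_
  ring

lemma continuous_psiVec {K : Type*} [Fintype K] (M : K → I → J → ℝ) (t : J → ℝ) :
    Continuous (fun s : I → ℝ => psiVec M s t) := by
  refine continuous_pi fun k => ?_
  refine continuous_finset_sum _ fun i _ => continuous_finset_sum _ fun j _ => ?_
  exact ((continuous_apply i).mul continuous_const).mul continuous_const

lemma rowS_smul_add {n : ℕ} (a b : ℝ) (ψ1 ψ2 : Fin (n+1) → ℝ) :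
    rowS n (a • ψ1 + b • ψ2) = a • rowS n ψ1 + b • rowS n ψ2 := by
  funext i; simp only [rowS, Pi.add_apply, Pi.smul_apply, smul_eq_mul]; ring

lemma continuous_rowS {n : ℕ} : Continuous (rowS n) :=
  continuous_pi fun i => (continuous_apply i.succ).sub (continuous_apply 0)

lemma tendsto_dot {K : Type*} [Fintype K] {ψ : ℕ → K → ℝ} {psiL : K → ℝ}
    (hψ : Filter.Tendsto ψ Filter.atTop (nhds psiL)) (a : K → ℝ) :
    Filter.Tendsto (fun m => ∑ k, a k * ψ m k) Filter.atTop (nhds (∑ k, a k * psiL k)) := by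
  refine tendsto_finset_sum _ fun k _ => ?_
  exact (tendsto_const_nhds.mul (tendsto_pi_nhds.1 hψ k))

/-- a differentiable function dominated by a function convex along segments:
its derivative is a subgradient of the dominating function. -/
lemma grad_subgradient {n : ℕ} {f g : (Fin n → ℝ) → ℝ} {x : Fin n → ℝ}
    (hdiff : DifferentiableAt ℝ f x)
    (hfg : ∀ y, f y ≤ g y) (hgx : g x = f x)
    (hconv : ∀ h : Fin n → ℝ, ∀ τ : ℝ, 0 ≤ τ → τ ≤ 1 →
      g (x + τ • h) ≤ g x + τ * (g (x + h) - g x)) :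
    ∀ h, g x + fderiv ℝ f x h ≤ g (x + h) := by
  intro h₀
  by_contra hcon
  push_neg at hcon
  set D := fderiv ℝ f x with hD
  set ε := g x + D h₀ - g (x + h₀) with hε
  have hεpos : 0 < ε := by simp only [hε]; linarith
  have hcurve : HasDerivAt (fun τ : ℝ => x + τ • h₀) h₀ 0 := by
    have h1 : HasDerivAt (fun τ : ℝ => τ • h₀) ((1:ℝ) • h₀) 0 :=
      (hasDerivAt_id (0:ℝ)).smul_const h₀
    simpa using h1.const_add x
  have hφ : HasDerivAt (fun τ : ℝ => f (x + τ • h₀)) (D h₀) 0 := by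
    have hf' : HasFDerivAt f D (x + (0:ℝ) • h₀) := by
      simpa using hdiff.hasFDerivAt
    have := hf'.comp_hasDerivAt (0:ℝ) hcurve
    exact this
  have hslope := hasDerivAt_iff_tendsto_slope.1 hφ
  have hslope' : Filter.Tendsto (slope (fun τ : ℝ => f (x + τ • h₀)) 0)
      (nhdsWithin 0 (Set.Ioi 0)) (nhds (D h₀)) :=
    hslope.mono_left (nhdsWithin_mono 0 (fun τ hτ => (ne_of_gt hτ : τ ≠ 0)))
  have hev : ∀ᶠ τ in nhdsWithin (0:ℝ) (Set.Ioi 0),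
      slope (fun τ : ℝ => f (x + τ • h₀)) 0 τ ≤ D h₀ - ε := by
    filter_upwards [Ioc_mem_nhdsGT_of_mem (Set.mem_Ico.2 ⟨le_refl (0:ℝ), zero_lt_one⟩)]
      with τ hτ
    obtain ⟨hτ0, hτ1⟩ := hτ
    have h1 : f (x + τ • h₀) ≤ f x + τ * (D h₀ - ε) := by
      have h2 := hconv h₀ τ hτ0.le hτ1
      have h3 := hfg (x + τ • h₀)
      have h4 : g (x + h₀) - g x = D h₀ - ε := by simp only [hε]; ring
      rw [h4] at h2
      rw [hgx] at h2
      linarith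
    rw [slope_def_field]
    simp only [sub_zero, zero_smul, add_zero]
    rw [div_le_iff₀ hτ0]
    nlinarith [h1]
  have := le_of_tendsto hslope' hev
  linarith


lemma key_danskin {n : ℕ} {M : Fin (n+1) → I → J → ℝ} {c : ℝ}
    (hc0 : 0 ≤ c) (hc : ∀ k i j, |M k i j| ≤ c)
    {x : Fin n → ℝ} (hdiff : DifferentiableAt ℝ (fun y => ve M (Tmap n y)) x) :
    ∃ ψ ∈ Fset M, rowS n ψ = grad (fun y => ve M (Tmap n y)) x ∧
      ∑ k, ψ k * Tmap n x k = ve M (Tmap n x) := by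
  classical
  set f : (Fin n → ℝ) → ℝ := fun y => ve M (Tmap n y) with hf
  set A : (Fin n → ℝ) → I → J → ℝ := fun y => fun i j => ∑ k, Tmap n y k * M k i j with hA
  have hAbound : ∀ y : Fin n → ℝ, ∀ i j, |A y i j| ≤ (∑ k, |Tmap n y k|) * c :=
    fun y => Aq_abs_le hc _
  have hfA : ∀ y, f y = matrixValue (A y) := fun y => rfl
  obtain ⟨t0, ht0, hval⟩ := exists_opt_t
      (mul_nonneg (Finset.sum_nonneg fun k _ => abs_nonneg _) hc0) (hAbound x)
  have hfg : ∀ y, f y ≤ supPay (A y) t0 :=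
    fun y => matrixValue_le_supPay (hAbound y) ⟨t0, ht0⟩
  have hgx : supPay (A x) t0 = f x := by rw [hfA, hval]
  have hpay : ∀ (y : Fin n → ℝ) (s : I → ℝ),
      pay (A y) s t0 = ∑ k, Tmap n y k * psiVec M s t0 k :=
    fun y s => pay_Aq M (Tmap n y) s t0
  have hle : ∀ (y : Fin n → ℝ) (s : stdSimplex ℝ I),
      ∑ k, Tmap n y k * psiVec M (↑s) t0 k ≤ supPay (A y) t0 := by
    intro y s
    rw [← hpay]
    exact le_ciSup (bddAbove_pay (hAbound y) ht0) s
  have hatt : ∀ y : Fin n → ℝ, ∃ s ∈ stdSimplex ℝ I,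
      supPay (A y) t0 = ∑ k, Tmap n y k * psiVec M s t0 k := by
    intro y
    obtain ⟨s, hs, hps⟩ := exists_opt_s (A y) (hAbound y) ht0
    exact ⟨s, hs, by rw [hps, hpay]⟩
  have haff : ∀ (ψ : Fin (n+1) → ℝ) (y z : Fin n → ℝ), ∑ k, Tmap n (y + z) k * ψ k
      = ∑ k, Tmap n y k * ψ k + ∑ i, rowS n ψ i * z i := by
    intro ψ y z
    have h1 := dot_Tmap_add ψ y z
    have e1 : ∑ k, Tmap n (y + z) k * ψ k = ∑ k, ψ k * Tmap n (y + z) k :=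
      Finset.sum_congr rfl fun k _ => mul_comm _ _
    have e2 : ∑ k, Tmap n y k * ψ k = ∑ k, ψ k * Tmap n y k :=
      Finset.sum_congr rfl fun k _ => mul_comm _ _
    rw [e1, e2, h1]
  have hscal : ∀ (ψ : Fin (n+1) → ℝ) (τ : ℝ) (z : Fin n → ℝ),
      ∑ i, rowS n ψ i * (τ • z) i = τ * ∑ i, rowS n ψ i * z i := by
    intro ψ τ z
    rw [Finset.mul_sum]
    exact Finset.sum_congr rfl fun i _ => by simp only [Pi.smul_apply, smul_eq_mul]; ring
  have hconvseg : ∀ h : Fin n → ℝ, ∀ τ : ℝ, 0 ≤ τ → τ ≤ 1 →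
      supPay (A (x + τ • h)) t0 ≤ supPay (A x) t0
        + τ * (supPay (A (x + h)) t0 - supPay (A x) t0) := by
    intro h τ hτ0 hτ1
    refine ciSup_le fun s => ?_
    rw [show pay (A (x + τ • h)) (↑s) t0
        = ∑ k, Tmap n (x + τ • h) k * psiVec M (↑s) t0 k from hpay _ _]
    rw [haff, hscal]
    have h4 := hle x s
    have h5 := hle (x + h) s
    rw [haff] at h5
    nlinarith [mul_nonneg hτ0 (sub_nonneg.2 h5), mul_nonneg (sub_nonneg.2 hτ1) (sub_nonneg.2 h4)]
  have hsub : ∀ h : Fin n → ℝ, supPay (A x) t0 + fderiv ℝ f x h ≤ supPay (A (x + h)) t0 :=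
    grad_subgradient (g := fun y => supPay (A y) t0) hdiff hfg hgx hconvseg
  set w : Fin n → ℝ := grad (fun y => ve M (Tmap n y)) x with hw
  have hDh : ∀ h : Fin n → ℝ, fderiv ℝ f x h = ∑ i, h i * w i := by
    intro h
    rw [clm_apply_eq_sum]
    rfl
  set Cb : Set (Fin (n+1) → ℝ) := (fun s : I → ℝ => psiVec M s t0) '' stdSimplex ℝ I with hCb
  have hCbcompact : IsCompact Cb := (isCompact_stdSimplex ℝ I).image (continuous_psiVec M t0)
  have hCbF : ∀ ψ ∈ Cb, ψ ∈ Fset M := by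
    rintro ψ ⟨s, hs, rfl⟩; exact psiVec_mem_Fset M hs ht0
  have hle' : ∀ (y : Fin n → ℝ), ∀ ψ ∈ Cb, ∑ k, Tmap n y k * ψ k ≤ supPay (A y) t0 := by
    rintro y ψ ⟨s, hs, rfl⟩; exact hle y ⟨s, hs⟩
  set Aset : Set (Fin (n+1) → ℝ) := Cb ∩ {ψ | ∑ k, Tmap n x k * ψ k = supPay (A x) t0}
    with hAset
  set A1 : Set (Fin n → ℝ) := rowS n '' Aset with hA1
  suffices hwA1 : w ∈ A1 by
    obtain ⟨ψ, ⟨hψC, hψdot⟩, hψrow⟩ := hwA1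
    refine ⟨ψ, hCbF ψ hψC, hψrow, ?_⟩
    have e2 : ∑ k, ψ k * Tmap n x k = ∑ k, Tmap n x k * ψ k :=
      Finset.sum_congr rfl fun k _ => mul_comm _ _
    rw [e2, hψdot, hgx]
  by_contra hnot
  have hA1conv : Convex ℝ A1 := by
    rintro w1 ⟨ψ1, ⟨⟨s1, hs1, rfl⟩, hd1⟩, rfl⟩ w2 ⟨ψ2, ⟨⟨s2, hs2, rfl⟩, hd2⟩, rfl⟩
      a b ha hb hab
    refine ⟨a • psiVec M s1 t0 + b • psiVec M s2 t0, ⟨⟨a • s1 + b • s2,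
      convex_stdSimplex ℝ I hs1 hs2 ha hb hab, psiVec_smul_add M a b s1 s2 t0⟩, ?_⟩,
      rowS_smul_add a b _ _⟩
    show ∑ k, Tmap n x k * (a • psiVec M s1 t0 + b • psiVec M s2 t0) k = supPay (A x) t0
    have : ∀ k, Tmap n x k * (a • psiVec M s1 t0 + b • psiVec M s2 t0) k
        = a * (Tmap n x k * psiVec M s1 t0 k) + b * (Tmap n x k * psiVec M s2 t0 k) := by
      intro k; simp only [Pi.add_apply, Pi.smul_apply, smul_eq_mul]; ring
    simp only [this, Finset.sum_add_distrib, ← Finset.mul_sum]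
    rw [hd1, hd2]
    have : a * supPay (A x) t0 + b * supPay (A x) t0 = (a + b) * supPay (A x) t0 := by ring
    rw [this, hab, one_mul]
  have hAcomp : IsCompact Aset := by
    refine hCbcompact.inter_right ?_
    exact isClosed_eq (continuous_finset_sum _ fun k _ =>
      continuous_const.mul (continuous_apply k)) continuous_const
  have hA1comp : IsCompact A1 := hAcomp.image continuous_rowS
  obtain ⟨f₀, u, hsep1, hsep2⟩ :=
    geometric_hahn_banach_closed_point hA1conv hA1comp.isClosed hnot
  set h : Fin n → ℝ := fun i => f₀ (Pi.single i 1) with hh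
  have hf₀ : ∀ y : Fin n → ℝ, f₀ y = ∑ i, y i * h i := fun y => clm_apply_eq_sum f₀ y
  set τ : ℕ → ℝ := fun m => 1 / (m + 1 : ℝ) with hτ
  have hτpos : ∀ m, 0 < τ m := fun m => by positivity
  have hchoice : ∀ m : ℕ, ∃ ψ ∈ Cb,
      ∑ k, Tmap n (x + τ m • h) k * ψ k = supPay (A (x + τ m • h)) t0 := by
    intro m
    obtain ⟨s, hs, heq⟩ := hatt (x + τ m • h)
    exact ⟨psiVec M s t0, ⟨s, hs, rfl⟩, heq.symm⟩
  choose ψs hψsC hψsEq using hchoice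
  -- per-m inequalities
  have hkey : ∀ m, ∑ k, Tmap n x k * ψs m k + τ m * ∑ i, rowS n (ψs m) i * h i
      ≥ supPay (A x) t0 + τ m * ∑ i, h i * w i := by
    intro m
    have h1 := hsub (τ m • h)
    rw [map_smul, smul_eq_mul, hDh] at h1
    have h2 := hψsEq m
    rw [haff, hscal] at h2
    linarith [h2.ge, h1]
  have hRge : ∀ m, ∑ i, rowS n (ψs m) i * h i ≥ ∑ i, h i * w i := by
    intro m
    have h1 := hkey m
    have h2 := hle' x (ψs m) (hψsC m)
    have h3 := hτpos m
    nlinarith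
  have hdotlb : ∀ m, ∑ k, Tmap n x k * ψs m k
      ≥ supPay (A x) t0 + τ m * (∑ i, h i * w i - ∑ i, rowS n (ψs m) i * h i) := by
    intro m
    have h1 := hkey m
    ring_nf
    ring_nf at h1
    linarith
  obtain ⟨psiL, hpsiLC, σ, hσ, hσconv⟩ := hCbcompact.tendsto_subseq hψsC
  have hτσ : Filter.Tendsto (fun j => τ (σ j)) Filter.atTop (nhds 0) := by
    have h1 : Filter.Tendsto τ Filter.atTop (nhds 0) := by
      rw [hτ]
      exact tendsto_one_div_add_atTop_nhds_zero_nat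
    exact h1.comp hσ.tendsto_atTop
  have hdotconv : Filter.Tendsto (fun j => ∑ k, Tmap n x k * ψs (σ j) k)
      Filter.atTop (nhds (∑ k, Tmap n x k * psiL k)) :=
    tendsto_dot hσconv (Tmap n x)
  have hRconv : Filter.Tendsto (fun j => ∑ i, rowS n (ψs (σ j)) i * h i)
      Filter.atTop (nhds (∑ i, rowS n psiL i * h i)) := by
    refine tendsto_finset_sum _ fun i _ => ?_
    have h1 : Filter.Tendsto (fun j => ψs (σ j) i.succ) Filter.atTop (nhds (psiL i.succ)) :=
      tendsto_pi_nhds.1 hσconv i.succ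
    have h2 : Filter.Tendsto (fun j => ψs (σ j) 0) Filter.atTop (nhds (psiL 0)) :=
      tendsto_pi_nhds.1 hσconv 0
    exact ((h1.sub h2).mul tendsto_const_nhds)
  -- psiL ∈ Aset
  have hdotub : ∑ k, Tmap n x k * psiL k ≤ supPay (A x) t0 :=
    le_of_tendsto hdotconv (Filter.Eventually.of_forall fun j => hle' x _ (hψsC (σ j)))
  have hdotlb' : supPay (A x) t0 ≤ ∑ k, Tmap n x k * psiL k := by
    have hrhs : Filter.Tendsto
        (fun j => supPay (A x) t0
          + τ (σ j) * (∑ i, h i * w i - ∑ i, rowS n (ψs (σ j)) i * h i))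
        Filter.atTop (nhds (supPay (A x) t0)) := by
      have h1 : Filter.Tendsto
          (fun j => τ (σ j) * (∑ i, h i * w i - ∑ i, rowS n (ψs (σ j)) i * h i))
          Filter.atTop (nhds 0) := by
        have := hτσ.mul ((tendsto_const_nhds (x := ∑ i, h i * w i)).sub hRconv)
        simpa using this
      have := (tendsto_const_nhds (x := supPay (A x) t0)).add h1
      simpa using this
    exact le_of_tendsto_of_tendsto' hrhs hdotconv (fun j => hdotlb (σ j))
  have hpsiLA : rowS n psiL ∈ A1 :=
    ⟨psiL, ⟨hpsiLC, le_antisymm hdotub hdotlb'⟩, rfl⟩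
  have hRL : ∑ i, rowS n psiL i * h i ≥ ∑ i, h i * w i :=
    ge_of_tendsto hRconv (Filter.Eventually.of_forall fun j => hRge (σ j))
  have hfw : f₀ w = ∑ i, w i * h i := hf₀ w
  have hfrowL : f₀ (rowS n psiL) = ∑ i, rowS n psiL i * h i := hf₀ _
  have hsepL := hsep1 _ hpsiLA
  have e3 : ∑ i, h i * w i = ∑ i, w i * h i :=
    Finset.sum_congr rfl fun i _ => mul_comm _ _
  rw [hfrowL] at hsepL
  rw [hfw] at hsep2
  rw [e3] at hRL
  linarith


lemma continuous_Tmap {n : ℕ} : Continuous (Tmap n) := by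
  refine continuous_pi fun k => ?_
  refine Fin.cases ?_ (fun i => ?_) k
  · have : (fun x : Fin n → ℝ => Tmap n x 0) = fun x => 1 - ∑ i, x i := by
      funext x; simp [Tmap]
    rw [this]
    exact continuous_const.sub (continuous_finset_sum _ fun i _ => continuous_apply i)
  · have : (fun x : Fin n → ℝ => Tmap n x i.succ) = fun x => x i := by
      funext x; simp [Tmap]
    rw [this]
    exact continuous_apply i

lemma isCompact_Fset {K : Type*} [Fintype K] (M : K → I → J → ℝ) :
    IsCompact (Fset M) := by
  have hfin : { w : K → ℝ | ∃ i : I, ∃ j : J, w = fun k => M k i j }.Finite := by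
    have : { w : K → ℝ | ∃ i : I, ∃ j : J, w = fun k => M k i j }
        = Set.range (fun ij : I × J => fun k => M k ij.1 ij.2) := by
      ext w
      simp only [Set.mem_setOf_eq, Set.mem_range, Prod.exists]
      constructor
      · rintro ⟨i, j, rfl⟩; exact ⟨i, j, rfl⟩
      · rintro ⟨i, j, rfl⟩; exact ⟨i, j, rfl⟩
    rw [this]
    exact Set.finite_range _
  exact hfin.isCompact_convexHull ℝ

lemma exists_entry_bound3 {K : Type*} [Fintype K] (M : K → I → J → ℝ) :
    ∃ c : ℝ, 0 ≤ c ∧ ∀ k i j, |M k i j| ≤ c := by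
  obtain ⟨c, hc0, hc⟩ := exists_entry_bound (fun p : K × I => fun j => M p.1 p.2 j)
  exact ⟨c, hc0, fun k i j => hc (k, i) j⟩

/-- the dot-product difference identity -/
lemma rowS_dot_diff {n : ℕ} (φ q p : Fin (n+1) → ℝ)
    (hq : q ∈ stdSimplex ℝ (Fin (n+1))) (hp : p ∈ stdSimplex ℝ (Fin (n+1))) :
    ∑ i, rowS n φ i * (q i.succ - p i.succ) = ∑ k, φ k * q k - ∑ k, φ k * p k := by
  have hdq : ∑ k, φ k * q k = φ 0 * (1 - ∑ i, Tinv q i) + ∑ i, φ i.succ * Tinv q i := by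
    rw [← dot_Tmap φ (Tinv q), Tmap_Tinv hq]
  have hdp : ∑ k, φ k * p k = φ 0 * (1 - ∑ i, Tinv p i) + ∑ i, φ i.succ * Tinv p i := by
    rw [← dot_Tmap φ (Tinv p), Tmap_Tinv hp]
  rw [hdq, hdp]
  simp only [rowS, Tinv, sub_mul, mul_sub, Finset.sum_sub_distrib, Finset.mul_sum]
  ring

/-- the set of candidate limits of gradients -/
lemma clarke_subset_W {n : ℕ} {M : Fin (n+1) → I → J → ℝ} {c : ℝ}
    (hc0 : 0 ≤ c) (hc : ∀ k i j, |M k i j| ≤ c)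
    {p : Fin (n+1) → ℝ} (hp : p ∈ stdSimplex ℝ (Fin (n+1)))
    {w : Fin n → ℝ} (hw : w ∈ clarkeGrad (fun x => ve M (Tmap n x)) (Tinv p)) :
    ∃ ψ ∈ Fset M, rowS n ψ = w ∧ ∑ k, ψ k * p k = ve M p := by
  classical
  set W : Set (Fin n → ℝ) :=
    {L | ∃ ψ ∈ Fset M, rowS n ψ = L ∧ ∑ k, ψ k * p k = ve M p} with hW
  have hWconv : Convex ℝ W := by
    rintro L1 ⟨ψ1, hF1, hr1, hd1⟩ L2 ⟨ψ2, hF2, hr2, hd2⟩ a b ha hb hab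
    refine ⟨a • ψ1 + b • ψ2, (convex_convexHull ℝ _) hF1 hF2 ha hb hab, ?_, ?_⟩
    · rw [rowS_smul_add, hr1, hr2]
    · have : ∀ k, (a • ψ1 + b • ψ2) k * p k
          = a * (ψ1 k * p k) + b * (ψ2 k * p k) := by
        intro k; simp only [Pi.add_apply, Pi.smul_apply, smul_eq_mul]; ring
      simp only [this, Finset.sum_add_distrib, ← Finset.mul_sum, hd1, hd2]
      have : a * ve M p + b * ve M p = (a + b) * ve M p := by ring
      rw [this, hab, one_mul]
  have hZW : { L : Fin n → ℝ | ∃ u : ℕ → Fin n → ℝ,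
      (∀ m, DifferentiableAt ℝ (fun x => ve M (Tmap n x)) (u m)) ∧
      Filter.Tendsto u Filter.atTop (nhds (Tinv p)) ∧
      Filter.Tendsto (fun m => grad (fun x => ve M (Tmap n x)) (u m))
        Filter.atTop (nhds L) } ⊆ W := by
    rintro L ⟨u, hdiffu, huconv, hgradconv⟩
    have hkey := fun m => key_danskin hc0 hc (hdiffu m)
    choose ψm hψF hψrow hψdot using hkey
    obtain ⟨ψL, hψLF, σ, hσ, hψconv⟩ := (isCompact_Fset M).tendsto_subseq hψF
    have hσat : Filter.Tendsto σ Filter.atTop Filter.atTop := hσ.tendsto_atTop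
    have hTu : Filter.Tendsto (fun j => Tmap n (u (σ j))) Filter.atTop (nhds p) := by
      have h1 : Filter.Tendsto (fun j => u (σ j)) Filter.atTop (nhds (Tinv p)) :=
        huconv.comp hσat
      have h2 := (continuous_Tmap.tendsto (Tinv p)).comp h1
      rwa [Tmap_Tinv hp] at h2
    have hrowL : rowS n ψL = L := by
      have h1 : Filter.Tendsto (fun j => rowS n (ψm (σ j))) Filter.atTop
          (nhds (rowS n ψL)) := (continuous_rowS.tendsto ψL).comp hψconv
      have h2 : Filter.Tendsto (fun j => rowS n (ψm (σ j))) Filter.atTop (nhds L) := by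
        have h3 := hgradconv.comp hσat
        have h4 : (fun j => rowS n (ψm (σ j)))
            = fun j => grad (fun x => ve M (Tmap n x)) (u (σ j)) := by
          funext j; rw [hψrow]
        rw [h4]
        exact h3
      exact tendsto_nhds_unique h1 h2
    have hdotL : ∑ k, ψL k * p k = ve M p := by
      have h1 : Filter.Tendsto (fun j => ∑ k, ψm (σ j) k * Tmap n (u (σ j)) k)
          Filter.atTop (nhds (∑ k, ψL k * p k)) := by
        refine tendsto_finset_sum _ fun k _ => ?_
        exact (tendsto_pi_nhds.1 hψconv k).mul (tendsto_pi_nhds.1 hTu k)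
      have h2 : Filter.Tendsto (fun j => ∑ k, ψm (σ j) k * Tmap n (u (σ j)) k)
          Filter.atTop (nhds (ve M p)) := by
        have h3 : (fun j => ∑ k, ψm (σ j) k * Tmap n (u (σ j)) k)
            = fun j => ve M (Tmap n (u (σ j))) := by
          funext j; rw [hψdot]
        rw [h3]
        exact ve_tendsto hc hTu
      exact tendsto_nhds_unique h1 h2
    exact ⟨ψL, hψLF, hrowL, hdotL⟩
  have := convexHull_min hZW hWconv hw
  exact this

end NRaux

end

/-- if the game satisfies property NR at `p⁰`, witnessed by `p ∈ Δ(K)`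
and `φ ∈ ℝ^K`, then `φ ∈ NR(p⁰)`; in particular `NR(p⁰)` is nonempty. -/
theorem stmt_2 {n : ℕ} {I J : Type*} [Fintype I] [Fintype J] [Nonempty I] [Nonempty J]
    (M : Fin (n + 1) → I → J → ℝ)
    (p0 : Fin (n + 1) → ℝ) (hp0 : p0 ∈ stdSimplex ℝ (Fin (n + 1)))
    (p : Fin (n + 1) → ℝ) (hp : p ∈ stdSimplex ℝ (Fin (n + 1)))
    (φ : Fin (n + 1) → ℝ)
    (h1 : cav (ve M) p = ve M p ∧ ve M p = ∑ k, φ k * p k ∧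
      cav (ve M) p0 = ∑ k, φ k * p0 k)
    (h2 : rowS n φ ∈ clarkeGrad (fun x => ve M (Tmap n x)) (Tinv p))
    (h3 : rowS n φ ∈ restrictedSuperdiff (cav (ve M)) p) :
    φ ∈ NRset M p0 ∧ (NRset M p0).Nonempty := by
  classical
  obtain ⟨hcavp, hvp, hcavp0⟩ := h1
  obtain ⟨c, hc0, hc⟩ := NRaux.exists_entry_bound3 M
  have hmem : φ ∈ NRset M p0 := by
    refine ⟨?_, hcavp0.symm, ?_⟩
    · -- part (a): φ majorizes ve on the simplex
      intro q hq
      have hTq : Tinv p + (fun i => q i.succ - p i.succ) = Tinv q := by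
        funext i; simp only [Pi.add_apply, Tinv]; ring
      have hmemq : Tmap n (Tinv p + (fun i => q i.succ - p i.succ))
          ∈ stdSimplex ℝ (Fin (n + 1)) := by
        rw [hTq, NRaux.Tmap_Tinv hq]; exact hq
      have h3' := h3 (fun i => q i.succ - p i.succ) hmemq
      rw [hTq, NRaux.Tmap_Tinv hq] at h3'
      have hdiff := NRaux.rowS_dot_diff φ q p hq hp
      have hveq := NRaux.ve_le_cav M hq
      linarith
    · -- part (c): φ ∈ Fset M
      obtain ⟨ψ, hψF, hψrow, hψdot⟩ := NRaux.clarke_subset_W hc0 hc hp h2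
      have hc0' : ∀ k, ψ k = φ k + (ψ 0 - φ 0) := by
        intro k
        refine Fin.cases (by ring) (fun i => ?_) k
        have := congrFun hψrow i
        simp only [rowS] at this
        linarith
      have hsum : ∑ k, ψ k * p k = ∑ k, φ k * p k + (ψ 0 - φ 0) := by
        have : ∀ k, ψ k * p k = φ k * p k + (ψ 0 - φ 0) * p k := by
          intro k; rw [hc0' k]; ring
        simp only [this, Finset.sum_add_distrib, ← Finset.mul_sum, hp.2, mul_one]
      have hzero : ψ 0 - φ 0 = 0 := by
        rw [hψdot, hvp] at hsum
        linarith
      have hφψ : ψ = φ := by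
        funext k; rw [hc0' k, hzero, add_zero]
      rwa [hφψ] at hψF
  exact ⟨hmem, ⟨φ, hmem⟩⟩
end

section
/- Let v : Δ(K) → ℝ be continuous, p⁰ ∈ Δ(K), and suppose Cav(v)(p⁰) = Σ_{s=1}^m λ_s v(p_s) for some λ_s > 0 with Σ_{s=1}^m λ_s = 1 and p_s ∈ Δ(K) with Σ_{s=1}^m λ_s p_s = p⁰, where p_{s₀} ∈ int Δ(K) for some s₀. Then there exists φ ∈ ℝ^K such that φ·q ≥ v(q) for all q ∈ Δ(K), φ·p⁰ = Cav(v)(p⁰), and φ·p_s = v(p_s) for every s = 1,…,m. -/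
open scoped BigOperators
open Finset
open Pointwise

set_option maxHeartbeats 1000000 in
/-- supporting-hyperplane lemma. If `Cav(v)(p⁰) = Σ λ_s v(p_s)` with a
convex combination `Σ λ_s p_s = p⁰`, `λ_s > 0`, and some `p_{s₀}` interior, then there
is an affine functional `φ` majorizing `v` on `Δ(K)`, agreeing with `Cav(v)` at `p⁰`,
and agreeing with `v` at every `p_s`. -/
theorem stmt_5 {K : Type*} [Fintype K]
    (v : (K → ℝ) → ℝ) (hv : ContinuousOn v (stdSimplex ℝ K))
    (p0 : K → ℝ) (hp0 : p0 ∈ stdSimplex ℝ K)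
    (m : ℕ) (lam : Fin m → ℝ) (ps : Fin m → K → ℝ)
    (hlam : ∀ s, 0 < lam s) (hlamsum : ∑ s, lam s = 1)
    (hps : ∀ s, ps s ∈ stdSimplex ℝ K)
    (hbary : ∑ s, lam s • ps s = p0)
    (hcav : cav v p0 = ∑ s, lam s * v (ps s))
    (s0 : Fin m) (hs0 : ∀ k, 0 < ps s0 k) :
    ∃ φ : K → ℝ, (∀ q ∈ stdSimplex ℝ K, v q ≤ ∑ k, φ k * q k) ∧
      (∑ k, φ k * p0 k = cav v p0) ∧
      (∀ s, ∑ k, φ k * ps s k = v (ps s)) := by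
  
  classical
  have hKne : Nonempty K := by
    rcases isEmpty_or_nonempty K with h | h
    · exfalso; have h2 := hp0.2; simp at h2
    · exact h
  have hΔconv : Convex ℝ (stdSimplex ℝ K) := convex_stdSimplex ℝ K
  have hΔcomp : IsCompact (stdSimplex ℝ K) := isCompact_stdSimplex ℝ K
  have hΔne : (stdSimplex ℝ K).Nonempty := ⟨p0, hp0⟩
  obtain ⟨xmax, hxmaxΔ, hxmax⟩ := hΔcomp.exists_isMaxOn hΔne hv
  obtain ⟨xmin, hxminΔ, hxmin⟩ := hΔcomp.exists_isMinOn hΔne hv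
  -- the set defining `cav v p0`
  set S : Set ℝ := { y : ℝ | ∃ g : (K → ℝ) → ℝ,
    ConcaveOn ℝ (stdSimplex ℝ K) g ∧ (∀ q ∈ stdSimplex ℝ K, v q ≤ g q) ∧ y = g p0 } with hSdef
  have hcavp0 : cav v p0 = sInf S := rfl
  have hSne : S.Nonempty :=
    ⟨v xmax, fun _ => v xmax, concaveOn_const _ hΔconv, fun q hq => hxmax hq, rfl⟩
  -- positivity of p0
  have hp0eq : ∀ k, p0 k = ∑ s, lam s * ps s k := by
    intro k
    rw [← hbary]
    simp [Finset.sum_apply]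
  have hp0pos : ∀ k, 0 < p0 k := by
    intro k
    have h2 : lam s0 * ps s0 k ≤ ∑ s, lam s * ps s k :=
      Finset.single_le_sum (fun i _ => mul_nonneg (hlam i).le ((hps i).1 k)) (Finset.mem_univ s0)
    have h3 := mul_pos (hlam s0) (hs0 k)
    rw [hp0eq k]
    linarith
  obtain ⟨k0, -, hk0⟩ := Finset.exists_min_image Finset.univ p0 Finset.univ_nonempty
  set n : ℝ := (Fintype.card K : ℝ) with hndef
  have hn : 0 < n := by
    rw [hndef]
    exact_mod_cast Fintype.card_pos (α := K)
  -- geometric objects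
  set G : Set ((K → ℝ) × ℝ) := (fun q => (q, v q)) '' (stdSimplex ℝ K) with hGdef
  set C : Set ((K → ℝ) × ℝ) := convexHull ℝ G with hCdef
  set L : Set ((K → ℝ) × ℝ) := {p | (∃ t : ℝ, p.1 = t • (1 : K → ℝ)) ∧ p.2 ≤ 0} with hLdef
  have hLconv : Convex ℝ L := by
    rintro ⟨x1, y1⟩ ⟨⟨t1, ht1⟩, hy1⟩ ⟨x2, y2⟩ ⟨⟨t2, ht2⟩, hy2⟩ a b ha hb hab
    have ht1' : x1 = t1 • (1 : K → ℝ) := ht1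
    have ht2' : x2 = t2 • (1 : K → ℝ) := ht2
    have hy1' : y1 ≤ 0 := hy1
    have hy2' : y2 ≤ 0 := hy2
    constructor
    · refine ⟨a * t1 + b * t2, ?_⟩
      show a • x1 + b • x2 = (a * t1 + b * t2) • (1 : K → ℝ)
      rw [ht1', ht2']
      ext k
      simp [mul_comm]
    · have h1 : a * y1 ≤ 0 := mul_nonpos_iff.2 (Or.inl ⟨ha, hy1'⟩)
      have h2 : b * y2 ≤ 0 := mul_nonpos_iff.2 (Or.inl ⟨hb, hy2'⟩)
      show a * y1 + b * y2 ≤ 0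
      linarith
  set D : Set ((K → ℝ) × ℝ) := C + L with hDdef
  have hDconv : Convex ℝ D := (convex_convexHull ℝ G).add hLconv
  -- C is contained in the hypograph of every concave majorant
  have hCsub : ∀ g : (K → ℝ) → ℝ, ConcaveOn ℝ (stdSimplex ℝ K) g →
      (∀ q ∈ stdSimplex ℝ K, v q ≤ g q) →
      C ⊆ {p : (K → ℝ) × ℝ | p.1 ∈ stdSimplex ℝ K ∧ p.2 ≤ g p.1} := by
    intro g hgconc hgmaj
    apply convexHull_min _ hgconc.convex_hypograph
    rintro p ⟨q, hq, rfl⟩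
    exact ⟨hq, hgmaj q hq⟩
  have hCΔ : ∀ p ∈ C, p.1 ∈ stdSimplex ℝ K :=
    fun p hp => (hCsub _ (concaveOn_const _ hΔconv) (fun q hq => hxmax hq) hp).1
  have hCcav : ∀ y : ℝ, (p0, y) ∈ C → y ≤ cav v p0 := by
    intro y hy
    rw [hcavp0]
    refine le_csInf hSne ?_
    rintro b ⟨g, hg1, hg2, rfl⟩
    exact (hCsub g hg1 hg2 hy).2
  have hzeroL : ((0 : K → ℝ), (0 : ℝ)) ∈ L := ⟨⟨0, by simp⟩, le_refl 0⟩
  have hCD : C ⊆ D := by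
    intro p hp
    have := Set.add_mem_add hp hzeroL
    have h0 : ((0 : K → ℝ), (0 : ℝ)) = 0 := rfl
    rw [h0, add_zero] at this
    exact this
  have hGC : ∀ q ∈ stdSimplex ℝ K, ((q, v q) : (K → ℝ) × ℝ) ∈ C :=
    fun q hq => subset_convexHull ℝ G ⟨q, hq, rfl⟩
  -- points of D over p0 are below cav v p0
  have hDp0 : ∀ w : ℝ, ((p0, w) : (K → ℝ) × ℝ) ∈ D → w ≤ cav v p0 := by
    intro w hw
    rw [hDdef, Set.mem_add] at hw
    obtain ⟨⟨q, y⟩, hqy, ⟨x2, y2⟩, ⟨⟨t, ht⟩, hy2⟩, heq⟩ := hw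
    rw [Prod.ext_iff] at heq
    have h1 : q + t • (1 : K → ℝ) = p0 := by
      have := heq.1
      simp only [Prod.fst_add] at this
      rw [← ht]; exact this
    have hqΔ := hCΔ _ hqy
    have hsum : (1 : ℝ) + t * n = 1 := by
      have h2 := congrArg (fun x : K → ℝ => ∑ k, x k) h1
      simp only [Pi.add_apply, Pi.smul_apply, Pi.one_apply, smul_eq_mul, mul_one,
        Finset.sum_add_distrib, Finset.sum_const, nsmul_eq_mul, Finset.card_univ] at h2
      rw [hqΔ.2, hp0.2] at h2
      rw [← hndef] at h2
      linarith [h2]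
    have ht0 : t = 0 := by
      have : t * n = 0 := by linarith
      rcases mul_eq_zero.1 this with h | h
      · exact h
      · exact absurd h hn.ne'
    have hq0 : q = p0 := by
      rw [ht0] at h1; simpa using h1
    have hyle : y ≤ cav v p0 := hCcav y (hq0 ▸ hqy)
    have h3 : y + y2 = w := by
      have := heq.2
      simpa using this
    linarith
  -- (p0, cav v p0) is not in the interior of D
  have hznot : ((p0, cav v p0) : (K → ℝ) × ℝ) ∉ interior D := by
    intro hz
    obtain ⟨ε, hε, hball⟩ := Metric.isOpen_iff.1 isOpen_interior _ hz
    have hmem : ((p0, cav v p0 + ε / 2) : (K → ℝ) × ℝ) ∈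
        Metric.ball ((p0, cav v p0) : (K → ℝ) × ℝ) ε := by
      rw [Metric.mem_ball, Prod.dist_eq]
      have h1 : dist p0 p0 = 0 := dist_self p0
      have h2 : dist (cav v p0 + ε / 2) (cav v p0) = ε / 2 := by
        rw [Real.dist_eq]
        rw [abs_of_pos (by linarith : (0:ℝ) < cav v p0 + ε / 2 - cav v p0)]
        ring
      rw [h1, h2]
      rw [max_eq_right (by linarith)]
      linarith
    have := hDp0 _ (interior_subset (hball hmem))
    linarith
  -- interior of D is nonempty
  set δ : ℝ := p0 k0 / 2 with hδdef
  have hδpos : 0 < δ := half_pos (hp0pos k0)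
  have hopen_sub : Metric.ball p0 δ ×ˢ Set.Iio (v xmin) ⊆ D := by
    rintro ⟨x, y⟩ ⟨hx, hy⟩
    simp only [Metric.mem_ball] at hx
    simp only [Set.mem_Iio] at hy
    set t : ℝ := (∑ k, x k - 1) / n with htdef
    set q : K → ℝ := x - t • (1 : K → ℝ) with hqdef
    have hxk : ∀ k, |x k - p0 k| < δ := by
      intro k
      have h1 : |(x - p0) k| ≤ ‖x - p0‖ := by
        have := norm_le_pi_norm (x - p0) k
        simpa [Real.norm_eq_abs] using this
      have h2 : ‖x - p0‖ = dist x p0 := (dist_eq_norm x p0).symm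
      simp only [Pi.sub_apply] at h1
      rw [h2] at h1
      linarith
    have htabs : |t| ≤ δ := by
      rw [htdef, abs_div, abs_of_pos hn, div_le_iff₀ hn]
      have h1 : ∑ k, x k - 1 = ∑ k, (x k - p0 k) := by
        rw [Finset.sum_sub_distrib, hp0.2]
      rw [h1]
      calc |∑ k, (x k - p0 k)| ≤ ∑ k, |x k - p0 k| := Finset.abs_sum_le_sum_abs _ _
        _ ≤ ∑ _k : K, δ := Finset.sum_le_sum (fun k _ => (hxk k).le)
        _ = δ * n := by
            rw [Finset.sum_const, nsmul_eq_mul, Finset.card_univ, ← hndef, mul_comm]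
    have hqΔ : q ∈ stdSimplex ℝ K := by
      constructor
      · intro k
        have h1 : q k = x k - t := by simp [hqdef]
        have h2 := hxk k
        have h3 := abs_le.1 htabs
        have h4 := hk0 k (Finset.mem_univ k)
        have h5 := abs_lt.1 h2
        rw [h1, hδdef] at *
        linarith
      · have h1 : ∑ k, q k = ∑ k, x k - t * n := by
          rw [hqdef]
          simp only [Pi.sub_apply, Pi.smul_apply, Pi.one_apply, smul_eq_mul, mul_one]
          rw [Finset.sum_sub_distrib, Finset.sum_const, nsmul_eq_mul, Finset.card_univ, ← hndef]
          ring
        rw [h1, htdef, div_mul_cancel₀ _ hn.ne']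
        ring
    have hyq : y - v q ≤ 0 := by
      have h : v xmin ≤ v q := hxmin hqΔ
      linarith
    have heq : ((x, y) : (K → ℝ) × ℝ) = (q, v q) + (t • (1 : K → ℝ), y - v q) := by
      rw [Prod.ext_iff]
      constructor
      · show x = q + t • (1 : K → ℝ)
        rw [hqdef]; ext k; simp
      · show y = v q + (y - v q)
        ring
    rw [heq]
    exact Set.add_mem_add (hGC q hqΔ) ⟨⟨t, rfl⟩, hyq⟩
  have hintne : (interior D).Nonempty := by
    refine ⟨(p0, v xmin - 1), ?_⟩
    rw [mem_interior]
    refine ⟨_, hopen_sub, (Metric.isOpen_ball).prod isOpen_Iio, ?_⟩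
    refine Set.mem_prod.2 ⟨Metric.mem_ball_self hδpos, ?_⟩
    simp only [Set.mem_Iio]
    linarith
  -- separation
  obtain ⟨f, hf⟩ := geometric_hahn_banach_open_point hDconv.interior isOpen_interior hznot
  obtain ⟨w0, hw0⟩ := hintne
  have hfw0 : f w0 < f (p0, cav v p0) := hf w0 hw0
  have hfD : ∀ a ∈ D, f a ≤ f (p0, cav v p0) := by
    intro a ha
    have key : ∀ θ : ℝ, θ ∈ Set.Ioo (0 : ℝ) 1 →
        θ * f w0 + (1 - θ) * f a < f (p0, cav v p0) := by
      intro θ hθ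
      have hmem : θ • w0 + (1 - θ) • a ∈ interior D := by
        apply hDconv.openSegment_interior_self_subset_interior hw0 ha
        exact ⟨θ, 1 - θ, hθ.1, by linarith [hθ.2], by ring, rfl⟩
      have := hf _ hmem
      simpa [map_add, map_smul, smul_eq_mul] using this
    have hlim : Filter.Tendsto (fun θ : ℝ => θ * f w0 + (1 - θ) * f a)
        (nhdsWithin 0 (Set.Ioi 0)) (nhds (f a)) := by
      have hcont : Continuous (fun θ : ℝ => θ * f w0 + (1 - θ) * f a) :=
        (continuous_id.mul continuous_const).add
          ((continuous_const.sub continuous_id).mul continuous_const)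
      have := hcont.tendsto 0
      simp only [zero_mul, sub_zero, one_mul, zero_add] at this
      exact this.mono_left nhdsWithin_le_nhds
    refine le_of_tendsto hlim ?_
    filter_upwards [Ioo_mem_nhdsGT_of_mem (Set.mem_Ico.2 ⟨le_refl (0:ℝ), one_pos⟩)] with θ hθ
    exact (key θ hθ).le
  -- decompose f
  set gl : (K → ℝ) → ℝ := fun x => f (x, 0) with hgldef
  set c : ℝ := f (0, 1) with hcdef
  have hsplit : ∀ (x : K → ℝ) (y : ℝ), f (x, y) = gl x + y * c := by
    intro x y
    have h1 : ((x, y) : (K → ℝ) × ℝ) = (x, 0) + y • ((0 : K → ℝ), (1 : ℝ)) := by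
      rw [Prod.ext_iff]; constructor <;> simp
    rw [h1, map_add, map_smul]
    simp [hgldef, hcdef, smul_eq_mul]
  have hgladd : ∀ x x' : K → ℝ, gl (x + x') = gl x + gl x' := by
    intro x x'
    have h1 : ((x + x', (0 : ℝ)) : (K → ℝ) × ℝ) = (x, 0) + (x', 0) := by
      rw [Prod.ext_iff]; constructor <;> simp
    show f (x + x', 0) = f (x, 0) + f (x', 0)
    rw [h1, map_add]
  have hglsmul : ∀ (a : ℝ) (x : K → ℝ), gl (a • x) = a * gl x := by
    intro a x
    have h1 : ((a • x, (0 : ℝ)) : (K → ℝ) × ℝ) = a • (x, 0) := by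
      rw [Prod.ext_iff]; constructor <;> simp
    show f (a • x, 0) = a * f (x, 0)
    rw [h1, map_smul, smul_eq_mul]
  have hglq : ∀ q : K → ℝ, gl q = ∑ k, q k * gl (Pi.single k 1) := by
    intro q
    have h0 : ∀ k : K, q k • (Pi.single k 1 : K → ℝ) = Pi.single k (q k) := by
      intro k
      rw [← Pi.single_smul, smul_eq_mul, mul_one]
    have h2 : ((q, (0 : ℝ)) : (K → ℝ) × ℝ)
        = ∑ k, (q k) • (((Pi.single k 1 : K → ℝ), (0 : ℝ)) : (K → ℝ) × ℝ) := by
      rw [Prod.ext_iff]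
      constructor
      · show q = (∑ k, (q k) • (((Pi.single k 1 : K → ℝ), (0 : ℝ)) : (K → ℝ) × ℝ)).1
        rw [Prod.fst_sum]
        simp only [Prod.smul_fst]
        simp_rw [h0]
        exact (Finset.univ_sum_single q).symm
      · show (0 : ℝ) = (∑ k, (q k) • (((Pi.single k 1 : K → ℝ), (0 : ℝ)) : (K → ℝ) × ℝ)).2
        rw [Prod.snd_sum]
        simp
    show f (q, 0) = ∑ k, q k * f (Pi.single k 1, 0)
    rw [h2, map_sum]
    refine Finset.sum_congr rfl fun k _ => ?_
    rw [map_smul, smul_eq_mul]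
  -- the main inequality on the simplex
  have hA : ∀ q ∈ stdSimplex ℝ K, gl q + v q * c ≤ gl p0 + cav v p0 * c := by
    intro q hq
    have := hfD (q, v q) (hCD (hGC q hq))
    rwa [hsplit, hsplit] at this
  -- c is nonnegative
  have hc0 : 0 ≤ c := by
    by_contra hneg
    push_neg at hneg
    set r : ℝ := (cav v p0 * c - v p0 * c + 1) / (-c) with hrdef
    have hfz_ge : gl p0 + v p0 * c ≤ gl p0 + cav v p0 * c := hA p0 hp0
    have hrpos : 0 < r := div_pos (by linarith) (by linarith)
    have hmemD : ((p0, v p0 - r) : (K → ℝ) × ℝ) ∈ D := by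
      have h1 : ((p0, v p0 - r) : (K → ℝ) × ℝ) = (p0, v p0) + ((0 : K → ℝ), -r) := by
        rw [Prod.ext_iff]; constructor
        · show p0 = p0 + 0; simp
        · show v p0 - r = v p0 + -r; ring
      rw [h1]
      exact Set.add_mem_add (hGC p0 hp0) ⟨⟨0, by simp⟩, by show -r ≤ 0; linarith⟩
    have h2 := hfD _ hmemD
    rw [hsplit, hsplit] at h2
    have hrc : r * (-c) = cav v p0 * c - v p0 * c + 1 := by
      rw [hrdef, div_mul_cancel₀]
      linarith
    nlinarith [h2, hrc]
  -- c is positive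
  have hcpos : 0 < c := by
    rcases hc0.lt_or_eq with h | h
    · exact h
    exfalso
    have hczero : c = 0 := h.symm
    have hB : ∀ q ∈ stdSimplex ℝ K, ∀ t : ℝ, gl q + t * gl (1 : K → ℝ) ≤ gl p0 := by
      intro q hq t
      have hmem : ((q + t • (1 : K → ℝ), v q) : (K → ℝ) × ℝ) ∈ D := by
        have h1 : ((q + t • (1 : K → ℝ), v q) : (K → ℝ) × ℝ)
            = (q, v q) + (t • (1 : K → ℝ), 0) := by
          rw [Prod.ext_iff]; constructor
          · rfl
          · show v q = v q + 0; ring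
        rw [h1]
        exact Set.add_mem_add (hGC q hq) ⟨⟨t, rfl⟩, le_refl 0⟩
      have h2 := hfD _ hmem
      rw [hsplit, hsplit, hczero] at h2
      rw [hgladd, hglsmul] at h2
      simp only [mul_zero, add_zero] at h2
      linarith
    have hglone : gl (1 : K → ℝ) = 0 := by
      by_contra hne
      have h1 := hB p0 hp0 (1 / gl (1 : K → ℝ))
      rw [div_mul_cancel₀ _ hne] at h1
      linarith
    have hgle : ∀ q ∈ stdSimplex ℝ K, gl q ≤ gl p0 := by
      intro q hq
      have := hB q hq 0
      simpa using this
    have hgleq : ∀ q ∈ stdSimplex ℝ K, gl q = gl p0 := by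
      intro q hq
      refine le_antisymm (hgle q hq) ?_
      set ε : ℝ := p0 k0 with hεdef
      have hεpos : 0 < ε := hp0pos k0
      have hmem : p0 + ε • (p0 - q) ∈ stdSimplex ℝ K := by
        constructor
        · intro k
          have hqk1 : q k ≤ 1 := by
            have h1 := Finset.single_le_sum (f := q) (fun i _ => hq.1 i) (Finset.mem_univ k)
            rw [hq.2] at h1; exact h1
          have h2 := hk0 k (Finset.mem_univ k)
          have h3 := hp0pos k
          simp only [Pi.add_apply, Pi.smul_apply, Pi.sub_apply, smul_eq_mul]
          nlinarith [hq.1 k, hεpos]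
        · simp only [Pi.add_apply, Pi.smul_apply, Pi.sub_apply, smul_eq_mul]
          rw [Finset.sum_add_distrib, ← Finset.mul_sum, Finset.sum_sub_distrib, hp0.2, hq.2]
          ring
      have h2 := hgle _ hmem
      rw [hgladd, hglsmul] at h2
      have hsub : gl (p0 - q) = gl p0 - gl q := by
        have h3 := hgladd (p0 - q) q
        rw [sub_add_cancel] at h3
        linarith
      rw [hsub] at h2
      nlinarith [hεpos, h2]
    have hglsingle : ∀ k : K, gl (Pi.single k 1) = gl p0 :=
      fun k => hgleq _ (single_mem_stdSimplex ℝ k)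
    have hglp0 : gl p0 = 0 := by
      have h1 := hglq (1 : K → ℝ)
      simp only [Pi.one_apply, one_mul] at h1
      simp_rw [hglsingle] at h1
      rw [Finset.sum_const, nsmul_eq_mul, Finset.card_univ, ← hndef] at h1
      rw [hglone] at h1
      rcases mul_eq_zero.1 h1.symm with h | h
      · exact absurd h hn.ne'
      · exact h
    have hglzero : ∀ x : K → ℝ, gl x = 0 := by
      intro x
      rw [hglq x]
      simp_rw [hglsingle, hglp0]
      simp
    have hfz : f (p0, cav v p0) = 0 := by
      rw [hsplit, hglzero, hczero]; ring
    have hfw0' : f w0 = 0 := by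
      have h1 : w0 = (w0.1, w0.2) := rfl
      rw [h1, hsplit, hglzero, hczero]; ring
    rw [hfz, hfw0'] at hfw0
    exact lt_irrefl 0 hfw0
  -- define φ and conclude
  set φ : K → ℝ := fun k => (gl p0 - gl (Pi.single k 1)) / c + cav v p0 with hφdef
  have hφsum : ∀ q : K → ℝ, q ∈ stdSimplex ℝ K →
      ∑ k, φ k * q k = (gl p0 - gl q) / c + cav v p0 := by
    intro q hq
    have e1 : ∑ k, φ k * q k
        = ∑ k, ((gl p0 * q k - q k * gl (Pi.single k 1)) / c + cav v p0 * q k) := by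
      refine Finset.sum_congr rfl fun k _ => ?_
      rw [hφdef]
      field_simp
    have e2 : ∑ k, ((gl p0 * q k - q k * gl (Pi.single k 1)) / c + cav v p0 * q k)
        = (∑ k, (gl p0 * q k - q k * gl (Pi.single k 1))) / c + cav v p0 * ∑ k, q k := by
      rw [Finset.sum_add_distrib, Finset.sum_div, Finset.mul_sum]
    have e3 : ∑ k, (gl p0 * q k - q k * gl (Pi.single k 1)) = gl p0 - gl q := by
      rw [Finset.sum_sub_distrib, ← Finset.mul_sum, hq.2, mul_one, ← hglq q]
    rw [e1, e2, e3, hq.2, mul_one]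
  have hmaj : ∀ q ∈ stdSimplex ℝ K, v q ≤ ∑ k, φ k * q k := by
    intro q hq
    rw [hφsum q hq]
    rw [← sub_le_iff_le_add, le_div_iff₀ hcpos]
    nlinarith [hA q hq]
  have hp0val : ∑ k, φ k * p0 k = cav v p0 := by
    rw [hφsum p0 hp0]
    simp
  refine ⟨φ, hmaj, hp0val, ?_⟩
  -- equality at each ps s
  have hswap : ∑ s, lam s * (∑ k, φ k * ps s k) = ∑ k, φ k * p0 k := by
    calc ∑ s, lam s * ∑ k, φ k * ps s k
        = ∑ s, ∑ k, φ k * (lam s * ps s k) := by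
          refine Finset.sum_congr rfl fun s _ => ?_
          rw [Finset.mul_sum]
          refine Finset.sum_congr rfl fun k _ => by ring
      _ = ∑ k, ∑ s, φ k * (lam s * ps s k) := Finset.sum_comm
      _ = ∑ k, φ k * p0 k := by
          refine Finset.sum_congr rfl fun k _ => ?_
          rw [← Finset.mul_sum, ← hp0eq k]
  have hzero : ∑ s, lam s * (∑ k, φ k * ps s k - v (ps s)) = 0 := by
    have h1 : ∑ s, lam s * (∑ k, φ k * ps s k - v (ps s))
        = ∑ s, lam s * (∑ k, φ k * ps s k) - ∑ s, lam s * v (ps s) := by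
      rw [← Finset.sum_sub_distrib]
      refine Finset.sum_congr rfl fun s _ => by ring
    rw [h1, hswap, hp0val, hcav]
    ring
  intro s
  have hterm := (Finset.sum_eq_zero_iff_of_nonneg
    (fun i _ => mul_nonneg (hlam i).le (sub_nonneg.2 (hmaj (ps i) (hps i))))).1
    hzero s (Finset.mem_univ s)
  rcases mul_eq_zero.1 hterm with h | h
  · exact absurd h (hlam s).ne'
  · linarith
end

section
/- Let (Ω, ℱ, ℙ) be a probability space with filtration (ℱ_t)_{t∈ℕ}. Let (p_t)_{t∈ℕ} be a Δ(K_A×K_B)-valued martingale with respect to (ℱ_t) with p_1 = p⁰ a.s. for a fixed p⁰ ∈ Δ(K_A×K_B), and let (β_{A,t})_{t∈ℕ} and (β_{B,t})_{t∈ℕ} be real-valued martingales with respect to (ℱ_t) such that for every t ∈ ℕ: β_{A,t} ≤ Cav(v_A)((p_t)_A) a.s. and β_{B,t} ≤ Cav(v_B)((p_t)_B) a.s., and such that β_{A,1} + β_{B,1} = Cav(v_A)(p⁰_A) + Cav(v_B)(p⁰_B) a.s. Then for each ℓ ∈ {A,B}, the process (Cav(v_ℓ)((p_t)_ℓ))_{t∈ℕ}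 is a martingale with respect to (ℱ_t). (This is the content of Theorem 4.1: for any equilibrium of the three-player repeated game paying ex-ante Cav(v_A)(p⁰_A) + Cav(v_B)(p⁰_B) to the informed player, the induced processes Cav(v_ℓ)(p_{tℓ}) are martingales.) -/
open scoped BigOperators
open Finset MeasureTheory

noncomputable section

/-- Marginal on `K_A` of a vector indexed by `K_A × K_B`. -/
def margA {KA KB : Type*} [Fintype KB] (q : KA × KB → ℝ) : KA → ℝ :=
  fun a => ∑ b, q (a, b)

/-- Marginal on `K_B` of a vector indexed by `K_A × K_B`. -/
def margB {KA KB : Type*} [Fintype KA] (q : KA × KB → ℝ) : KB → ℝ :=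
  fun b => ∑ a, q (a, b)

end


noncomputable section CavTheory

variable {K : Type*} [Fintype K]

def cavSet (v : (K → ℝ) → ℝ) (p : K → ℝ) : Set ℝ :=
  { y : ℝ | ∃ g : (K → ℝ) → ℝ,
    ConcaveOn ℝ (stdSimplex ℝ K) g ∧ (∀ q ∈ stdSimplex ℝ K, v q ≤ g q) ∧ y = g p }

lemma cav_def (v : (K → ℝ) → ℝ) (p : K → ℝ) : cav v p = sInf (cavSet v p) := rfl

lemma cavSet_nonempty {v : (K → ℝ) → ℝ} {B : ℝ} (hB : ∀ q ∈ stdSimplex ℝ K, v q ≤ B)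
    (p : K → ℝ) : (cavSet v p).Nonempty :=
  ⟨B, fun _ => B, concaveOn_const _ (convex_stdSimplex ℝ K), hB, rfl⟩

lemma cavSet_bddBelow {v : (K → ℝ) → ℝ} {p : K → ℝ} (hp : p ∈ stdSimplex ℝ K) :
    BddBelow (cavSet v p) := by
  refine ⟨v p, ?_⟩
  rintro y ⟨g, hg, hmaj, rfl⟩
  exact hmaj p hp

lemma cav_le_of_mem {v : (K → ℝ) → ℝ} {p : K → ℝ} (hp : p ∈ stdSimplex ℝ K)
    {g : (K → ℝ) → ℝ} (hg : ConcaveOn ℝ (stdSimplex ℝ K) g)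
    (hmaj : ∀ q ∈ stdSimplex ℝ K, v q ≤ g q) : cav v p ≤ g p :=
  csInf_le (cavSet_bddBelow hp) ⟨g, hg, hmaj, rfl⟩

lemma le_cav {v : (K → ℝ) → ℝ} {B : ℝ} (hB : ∀ q ∈ stdSimplex ℝ K, v q ≤ B)
    {p : K → ℝ} (hp : p ∈ stdSimplex ℝ K) : v p ≤ cav v p := by
  refine le_csInf (cavSet_nonempty hB p) ?_
  rintro y ⟨g, hg, hmaj, rfl⟩
  exact hmaj p hp

lemma cav_of_not_mem {v : (K → ℝ) → ℝ} {B : ℝ} (hB : ∀ q ∈ stdSimplex ℝ K, v q ≤ B)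
    {p : K → ℝ} (hp : p ∉ stdSimplex ℝ K) : cav v p = 0 := by
  classical
  have hall : ∀ y : ℝ, y ∈ cavSet v p := by
    intro y
    refine ⟨fun x => if x ∈ stdSimplex ℝ K then B else y, ⟨convex_stdSimplex ℝ K, ?_⟩, ?_, ?_⟩
    · intro x hx z hz a b ha hb hab
      have hxz : a • x + b • z ∈ stdSimplex ℝ K := (convex_stdSimplex ℝ K) hx hz ha hb hab
      simp only [if_pos hx, if_pos hz, if_pos hxz, smul_eq_mul]
      rw [← add_mul, hab, one_mul]
    · intro q hq; simp only [if_pos hq]; exact hB q hq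
    · simp [hp]
  have hnb : ¬ BddBelow (cavSet v p) := by
    rintro ⟨c, hc⟩
    have := hc (hall (c - 1))
    linarith
  rw [cav_def, Real.sInf_of_not_bddBelow hnb]

def repSet (v : (K → ℝ) → ℝ) (p : K → ℝ) : Set ℝ :=
  { y : ℝ | ∃ (n : ℕ) (w : Fin n → ℝ) (q : Fin n → K → ℝ),
      (∀ i, 0 ≤ w i) ∧ (∑ i, w i = 1) ∧ (∀ i, q i ∈ stdSimplex ℝ K) ∧
      (∑ i, w i • q i) = p ∧ y = ∑ i, w i * v (q i) }

lemma self_mem_repSet {v : (K → ℝ) → ℝ} {p : K → ℝ} (hp : p ∈ stdSimplex ℝ K) :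
    v p ∈ repSet v p :=
  ⟨1, fun _ => 1, fun _ => p, fun _ => zero_le_one, by simp, fun _ => hp, by simp, by simp⟩

lemma repSet_le {v : (K → ℝ) → ℝ} {B : ℝ} (hB : ∀ q ∈ stdSimplex ℝ K, v q ≤ B)
    {p : K → ℝ} : ∀ y ∈ repSet v p, y ≤ B := by
  rintro y ⟨n, w, q, hw0, hw1, hq, hbar, rfl⟩
  calc ∑ i, w i * v (q i) ≤ ∑ i, w i * B :=
        Finset.sum_le_sum fun i _ => mul_le_mul_of_nonneg_left (hB _ (hq i)) (hw0 i)
    _ = B := by rw [← Finset.sum_mul, hw1, one_mul]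

lemma repSet_bddAbove {v : (K → ℝ) → ℝ} {B : ℝ} (hB : ∀ q ∈ stdSimplex ℝ K, v q ≤ B)
    (p : K → ℝ) : BddAbove (repSet v p) :=
  ⟨B, fun _ hy => repSet_le hB _ hy⟩

lemma bar_apply {n : ℕ} (w : Fin n → ℝ) (q : Fin n → K → ℝ) (k : K) :
    (∑ i, w i • q i) k = ∑ i, w i * q i k := by
  simp [Finset.sum_apply, Pi.smul_apply, smul_eq_mul]

def crep (v : (K → ℝ) → ℝ) (p : K → ℝ) : ℝ := sSup (repSet v p)

lemma le_crep {v : (K → ℝ) → ℝ} {B : ℝ} (hB : ∀ q ∈ stdSimplex ℝ K, v q ≤ B)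
    {p : K → ℝ} (hp : p ∈ stdSimplex ℝ K) : v p ≤ crep v p :=
  le_csSup (repSet_bddAbove hB p) (self_mem_repSet hp)

lemma crep_le {v : (K → ℝ) → ℝ} {B : ℝ} (hB : ∀ q ∈ stdSimplex ℝ K, v q ≤ B)
    {p : K → ℝ} (hp : p ∈ stdSimplex ℝ K) : crep v p ≤ B :=
  csSup_le ⟨_, self_mem_repSet hp⟩ (repSet_le hB)

lemma repSet_combine {v : (K → ℝ) → ℝ} {x y : K → ℝ} {a b : ℝ}
    (ha : 0 ≤ a) (hb : 0 ≤ b) (hab : a + b = 1) {u t : ℝ}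
    (hu : u ∈ repSet v x) (ht : t ∈ repSet v y) :
    a * u + b * t ∈ repSet v (a • x + b • y) := by
  obtain ⟨n, c, q, hc0, hc1, hq, hbar, rfl⟩ := hu
  obtain ⟨m, d, r, hd0, hd1, hr, hbar', rfl⟩ := ht
  refine ⟨n + m, Fin.append (fun i => a * c i) (fun j => b * d j), Fin.append q r,
    ?_, ?_, ?_, ?_, ?_⟩
  · intro i
    refine Fin.addCases (motive := fun i =>
      0 ≤ Fin.append (fun i => a * c i) (fun j => b * d j) i) (fun i => ?_) (fun j => ?_) i
    · simpa only [Fin.append_left] using mul_nonneg ha (hc0 i)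
    · simpa only [Fin.append_right] using mul_nonneg hb (hd0 j)
  · rw [Fin.sum_univ_add]
    simp only [Fin.append_left, Fin.append_right]
    rw [← Finset.mul_sum, ← Finset.mul_sum, hc1, hd1]
    linarith
  · intro i
    refine Fin.addCases (motive := fun i =>
      Fin.append q r i ∈ stdSimplex ℝ K) (fun i => ?_) (fun j => ?_) i
    · simpa only [Fin.append_left] using hq i
    · simpa only [Fin.append_right] using hr j
  · rw [Fin.sum_univ_add]
    simp only [Fin.append_left, Fin.append_right, mul_smul]
    rw [← Finset.smul_sum, ← Finset.smul_sum, hbar, hbar']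
  · rw [Fin.sum_univ_add]
    simp only [Fin.append_left, Fin.append_right]
    rw [Finset.mul_sum, Finset.mul_sum]
    congr 1 <;> exact Finset.sum_congr rfl fun i _ => by ring

lemma crep_concave {v : (K → ℝ) → ℝ} {B : ℝ} (hB : ∀ q ∈ stdSimplex ℝ K, v q ≤ B) :
    ConcaveOn ℝ (stdSimplex ℝ K) (crep v) := by
  refine ⟨convex_stdSimplex ℝ K, ?_⟩
  intro x hx y hy a b ha hb hab
  have hxy : a • x + b • y ∈ stdSimplex ℝ K := (convex_stdSimplex ℝ K) hx hy ha hb hab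
  have hkey : ∀ u ∈ repSet v x, ∀ t ∈ repSet v y,
      a * u + b * t ≤ crep v (a • x + b • y) := fun u hu t ht =>
    le_csSup (repSet_bddAbove hB _) (repSet_combine ha hb hab hu ht)
  have hAx : (repSet v x).Nonempty := ⟨_, self_mem_repSet hx⟩
  have hAy : (repSet v y).Nonempty := ⟨_, self_mem_repSet hy⟩
  rcases eq_or_lt_of_le ha with h|ha'
  · have hb1 : b = 1 := by linarith
    simp only [← h, hb1, zero_smul, one_smul, smul_eq_mul, zero_mul, zero_add, one_mul, le_refl]
  rcases eq_or_lt_of_le hb with h|hb'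
  · have ha1 : a = 1 := by linarith
    simp only [← h, ha1, zero_smul, one_smul, smul_eq_mul, zero_mul, add_zero, one_mul, le_refl]
  have h1 : sSup (repSet v x) ≤ (crep v (a • x + b • y) - b * sSup (repSet v y)) / a := by
    refine csSup_le hAx (fun u hu => ?_)
    rw [le_div_iff₀ ha']
    have h2 : b * sSup (repSet v y) ≤ crep v (a • x + b • y) - a * u := by
      rw [mul_comm, ← le_div_iff₀ hb']
      refine csSup_le hAy fun t ht => ?_
      rw [le_div_iff₀ hb']
      have := hkey u hu t ht; linarith
    linarith
  have h1' := (le_div_iff₀ ha').1 h1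
  simp only [smul_eq_mul]
  show a * sSup (repSet v x) + b * sSup (repSet v y) ≤ crep v (a • x + b • y)
  nlinarith [h1']

lemma cav_eq_crep {v : (K → ℝ) → ℝ} {B : ℝ} (hB : ∀ q ∈ stdSimplex ℝ K, v q ≤ B)
    {p : K → ℝ} (hp : p ∈ stdSimplex ℝ K) : cav v p = crep v p := by
  refine le_antisymm ?_ ?_
  · exact cav_le_of_mem hp (crep_concave hB) (fun q hq => le_crep hB hq)
  · refine le_csInf (cavSet_nonempty hB p) ?_
    rintro z ⟨g, hg, hmaj, rfl⟩
    refine csSup_le ⟨_, self_mem_repSet hp⟩ ?_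
    rintro u ⟨n, w, q, hw0, hw1, hq, hbar, rfl⟩
    calc ∑ i, w i * v (q i)
        ≤ ∑ i, w i * g (q i) :=
          Finset.sum_le_sum fun i _ => mul_le_mul_of_nonneg_left (hmaj _ (hq i)) (hw0 i)
      _ = ∑ i, w i • g (q i) := by simp [smul_eq_mul]
      _ ≤ g (∑ i, w i • q i) := hg.le_map_sum (fun i _ => hw0 i) hw1 (fun i _ => hq i)
      _ = g p := by rw [hbar]

lemma uniform_mem_stdSimplex [Nonempty K] :
    (fun _ : K => (Fintype.card K : ℝ)⁻¹) ∈ stdSimplex ℝ K := by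
  constructor
  · intro k; positivity
  · rw [Finset.sum_const, Finset.card_univ, nsmul_eq_mul, mul_inv_cancel₀]
    exact_mod_cast Fintype.card_ne_zero

lemma crep_transport {v : (K → ℝ) → ℝ} {L : NNReal}
    (hv : LipschitzOnWith L v (stdSimplex ℝ K))
    {B : ℝ} (hB : ∀ q ∈ stdSimplex ℝ K, |v q| ≤ B)
    {p p' : K → ℝ} (hp : p ∈ stdSimplex ℝ K) (hp' : p' ∈ stdSimplex ℝ K) :
    crep v p ≤ crep v p' + (2 * L + 2 * B) * ∑ k, max (p k - p' k) 0 := by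
  classical
  have hB' : ∀ q ∈ stdSimplex ℝ K, v q ≤ B := fun q hq => (abs_le.1 (hB q hq)).2
  have hBlo : ∀ q ∈ stdSimplex ℝ K, -B ≤ v q := fun q hq => (abs_le.1 (hB q hq)).1
  have hB0 : 0 ≤ B := le_trans (abs_nonneg _) (hB p hp)
  have hL0 : (0:ℝ) ≤ L := L.coe_nonneg
  set d : K → ℝ := fun k => max (p k - p' k) 0 with hd_def
  set e : K → ℝ := fun k => max (p' k - p k) 0 with he_def
  have hd0 : ∀ k, 0 ≤ d k := fun k => le_max_right _ _
  have he0 : ∀ k, 0 ≤ e k := fun k => le_max_right _ _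
  have hdp : ∀ k, d k ≤ p k := fun k => max_le (by linarith [hp'.1 k]) (hp.1 k)
  have hde : ∀ k, d k - e k = p k - p' k := by
    intro k
    rcases le_total (p k) (p' k) with h|h
    · simp only [hd_def, he_def]
      rw [max_eq_right (by linarith : p k - p' k ≤ 0), max_eq_left (by linarith : (0:ℝ) ≤ p' k - p k)]
      ring
    · simp only [hd_def, he_def]
      rw [max_eq_left (by linarith : (0:ℝ) ≤ p k - p' k), max_eq_right (by linarith : p' k - p k ≤ 0)]
      ring
  set ε : ℝ := ∑ k, d k with hε_def
  have hε0 : 0 ≤ ε := Finset.sum_nonneg fun k _ => hd0 k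
  have hεe : ∑ k, e k = ε := by
    have h1 : ∑ k, (d k - e k) = ∑ k, (p k - p' k) := Finset.sum_congr rfl fun k _ => hde k
    rw [Finset.sum_sub_distrib, Finset.sum_sub_distrib, hp.2, hp'.2] at h1
    simp only [hε_def]; linarith
  rcases eq_or_lt_of_le hε0 with hε|hε
  · have hdz := (Finset.sum_eq_zero_iff_of_nonneg (fun k _ => hd0 k)).1 hε.symm
    have hez := (Finset.sum_eq_zero_iff_of_nonneg (fun k _ => he0 k)).1 (hεe.trans hε.symm)
    have hpp : p = p' := by
      funext k
      have h1 := hde k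
      rw [hdz k (Finset.mem_univ k), hez k (Finset.mem_univ k)] at h1
      linarith
    rw [hpp, ← hε]
    simp
  · set r : K → ℝ := fun k => e k / ε with hr_def
    have hrS : r ∈ stdSimplex ℝ K := by
      constructor
      · intro k; exact div_nonneg (he0 k) hε0
      · rw [← Finset.sum_div, hεe, div_self hε.ne']
    set ρ : K → ℝ := fun k => if p k = 0 then 0 else d k / p k with hρ_def
    have hρ0 : ∀ k, 0 ≤ ρ k := by
      intro k; simp only [hρ_def]
      split_ifs with h
      · exact le_rfl
      · exact div_nonneg (hd0 k) (hp.1 k)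
    have hρ1 : ∀ k, ρ k ≤ 1 := by
      intro k; simp only [hρ_def]
      split_ifs with h
      · exact zero_le_one
      · exact (div_le_one (lt_of_le_of_ne (hp.1 k) (Ne.symm h))).2 (hdp k)
    have hρp : ∀ k, p k * ρ k = d k := by
      intro k; simp only [hρ_def]
      split_ifs with h
      · have hz : d k = 0 := le_antisymm (h ▸ hdp k) (hd0 k)
        rw [h, hz]; ring
      · field_simp
    refine csSup_le ⟨_, self_mem_repSet hp⟩ ?_
    rintro V ⟨n, w, q, hw0, hw1, hq, hbar, rfl⟩
    set mi : Fin n → ℝ := fun i => ∑ k, q i k * ρ k with hmi_def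
    have hmi0 : ∀ i, 0 ≤ mi i := fun i =>
      Finset.sum_nonneg fun k _ => mul_nonneg ((hq i).1 k) (hρ0 k)
    have hmi1 : ∀ i, mi i ≤ 1 := by
      intro i
      calc mi i ≤ ∑ k, q i k * 1 :=
          Finset.sum_le_sum fun k _ => mul_le_mul_of_nonneg_left (hρ1 k) ((hq i).1 k)
        _ = 1 := by simp [(hq i).2]
    have hwq : ∀ k, ∑ i, w i * q i k = p k := fun k => by rw [← bar_apply, hbar]
    have hwm : ∑ i, w i * mi i = ε := by
      calc ∑ i, w i * mi i = ∑ i, ∑ k, w i * q i k * ρ k := by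
            simp only [hmi_def, Finset.mul_sum, mul_assoc]
        _ = ∑ k, ∑ i, w i * q i k * ρ k := Finset.sum_comm
        _ = ∑ k, p k * ρ k := by
            refine Finset.sum_congr rfl fun k _ => ?_
            rw [← Finset.sum_mul, hwq k]
        _ = ∑ k, d k := Finset.sum_congr rfl fun k _ => hρp k
    set qh : Fin n → K → ℝ := fun i =>
      if _ : mi i < 1 then (fun k => q i k * (1 - ρ k) / (1 - mi i)) else r with hqh_def
    have hsumq : ∀ i, ∑ k, q i k * (1 - ρ k) = 1 - mi i := by
      intro i
      simp only [mul_one_sub]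
      rw [Finset.sum_sub_distrib, (hq i).2]
    have hqhS : ∀ i, qh i ∈ stdSimplex ℝ K := by
      intro i
      simp only [hqh_def]
      split_ifs with h
      · constructor
        · intro k
          exact div_nonneg (mul_nonneg ((hq i).1 k) (by linarith [hρ1 k]))
            (by linarith : (0:ℝ) ≤ 1 - mi i)
        · rw [← Finset.sum_div, hsumq i, div_self (by linarith : (0:ℝ) < 1 - mi i).ne']
      · exact hrS
    have hterm : ∀ i k, (w i * (1 - mi i)) * qh i k = w i * (q i k * (1 - ρ k)) := by
      intro i k
      simp only [hqh_def]
      split_ifs with h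
      · have h1 : (1:ℝ) - mi i ≠ 0 := (by linarith : (0:ℝ) < 1 - mi i).ne'
        field_simp
      · have h1 : mi i = 1 := le_antisymm (hmi1 i) (not_lt.1 h)
        have hs := hsumq i
        rw [h1] at hs
        have hnn : ∀ x ∈ Finset.univ, (0:ℝ) ≤ q i x * (1 - ρ x) :=
          fun x _ => mul_nonneg ((hq i).1 x) (by linarith [hρ1 x])
        have h2 : q i k * (1 - ρ k) = 0 :=
          (Finset.sum_eq_zero_iff_of_nonneg hnn).1 (by rw [hs]; ring) k (Finset.mem_univ k)
        rw [h1, h2]; ring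
    have hmem : (∑ i, (w i * (1 - mi i)) * v (qh i)) + ε * v r ∈ repSet v p' := by
      refine ⟨n + 1, Fin.append (fun i => w i * (1 - mi i)) (fun _ => ε),
        Fin.append qh (fun _ => r), ?_, ?_, ?_, ?_, ?_⟩
      · intro i
        refine Fin.addCases (motive := fun i =>
          0 ≤ Fin.append (fun i => w i * (1 - mi i)) (fun _ => ε) i)
          (fun i => ?_) (fun j => ?_) i
        · simpa only [Fin.append_left] using mul_nonneg (hw0 i) (by linarith [hmi1 i])
        · simpa only [Fin.append_right] using hε0
      · rw [Fin.sum_univ_add]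
        simp only [Fin.append_left, Fin.append_right, Fin.sum_univ_one]
        rw [Finset.sum_congr rfl (fun i _ => mul_one_sub (w i) (mi i)),
          Finset.sum_sub_distrib, hw1, hwm]
        ring
      · intro i
        refine Fin.addCases (motive := fun i =>
          Fin.append qh (fun _ => r) i ∈ stdSimplex ℝ K) (fun i => ?_) (fun j => ?_) i
        · simpa only [Fin.append_left] using hqhS i
        · simpa only [Fin.append_right] using hrS
      · funext k
        rw [bar_apply, Fin.sum_univ_add]
        simp only [Fin.append_left, Fin.append_right, Fin.sum_univ_one]
        have h1 : ∑ i, (w i * (1 - mi i)) * qh i k = p k - d k := by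
          rw [Finset.sum_congr rfl (fun i _ => hterm i k)]
          have h2 : ∑ i, w i * (q i k * (1 - ρ k)) = (∑ i, w i * q i k) * (1 - ρ k) := by
            rw [Finset.sum_mul]; exact Finset.sum_congr rfl fun i _ => by ring
          rw [h2, hwq k, mul_one_sub, hρp k]
        have h2 : ε * r k = e k := by
          simp only [hr_def]; field_simp
        rw [h1, h2]
        have := hde k; linarith
      · rw [Fin.sum_univ_add]
        simp only [Fin.append_left, Fin.append_right, Fin.sum_univ_one]
    have hle : (∑ i, (w i * (1 - mi i)) * v (qh i)) + ε * v r ≤ crep v p' :=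
      le_csSup (repSet_bddAbove hB' p') hmem
    have hper : ∀ i, w i * v (q i) ≤
        (w i * (1 - mi i)) * v (qh i) + (2 * L + B) * (w i * mi i) := by
      intro i
      by_cases h : mi i < 1
      · have h1m : (0:ℝ) < 1 - mi i := by linarith
        have hqhi : qh i = fun k => q i k * (1 - ρ k) / (1 - mi i) := by
          simp only [hqh_def]; rw [dif_pos h]
        have habs : ∀ k, |qh i k - q i k| ≤ q i k * (mi i + ρ k) / (1 - mi i) := by
          intro k
          rw [hqhi]
          have h3 : q i k * (1 - ρ k) / (1 - mi i) - q i k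
              = q i k * (mi i - ρ k) / (1 - mi i) := by
            field_simp; ring
          rw [h3, abs_div, abs_of_pos h1m, abs_mul, abs_of_nonneg ((hq i).1 k)]
          have h5 : |mi i - ρ k| ≤ mi i + ρ k :=
            abs_le.2 ⟨by linarith [hmi0 i, hρ0 k], by linarith [hmi0 i, hρ0 k]⟩
          gcongr
          exact (hq i).1 k
        have hsumabs : ∑ k, |qh i k - q i k| ≤ 2 * mi i / (1 - mi i) := by
          calc ∑ k, |qh i k - q i k| ≤ ∑ k, q i k * (mi i + ρ k) / (1 - mi i) :=
              Finset.sum_le_sum fun k _ => habs k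
            _ = (∑ k, q i k * (mi i + ρ k)) / (1 - mi i) := by rw [Finset.sum_div]
            _ = (mi i + mi i) / (1 - mi i) := by
                congr 1
                rw [Finset.sum_congr rfl
                  (fun k _ => (by ring : q i k * (mi i + ρ k) = mi i * q i k + q i k * ρ k)),
                  Finset.sum_add_distrib, ← Finset.mul_sum, (hq i).2, mul_one]
            _ = 2 * mi i / (1 - mi i) := by ring
        have hdist : dist (qh i) (q i) ≤ 2 * mi i / (1 - mi i) := by
          have h0 : 0 ≤ ∑ k, |qh i k - q i k| :=
            Finset.sum_nonneg fun k _ => abs_nonneg (qh i k - q i k)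
          refine le_trans ((dist_pi_le_iff h0).2 fun k => ?_) hsumabs
          rw [Real.dist_eq]
          exact Finset.single_le_sum (f := fun j => |qh i j - q i j|)
            (fun j _ => abs_nonneg (qh i j - q i j)) (Finset.mem_univ k)
        have hvd : |v (qh i) - v (q i)| ≤ L * (2 * mi i / (1 - mi i)) := by
          have h1 := hv.dist_le_mul _ (hqhS i) _ (hq i)
          rw [Real.dist_eq] at h1
          exact h1.trans (mul_le_mul_of_nonneg_left hdist hL0)
        have hvq : |v (q i)| ≤ B := hB _ (hq i)
        have hvd' : v (q i) - v (qh i) ≤ 2 * L * mi i / (1 - mi i) := by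
          have h6 := (abs_le.1 hvd).1
          have h7 : (2:ℝ) * L * mi i / (1 - mi i) = L * (2 * mi i / (1 - mi i)) := by ring
          rw [h7]; linarith
        have e1 : (v (q i) - v (qh i)) * (1 - mi i) ≤ 2 * L * mi i := by
          have h8 := mul_le_mul_of_nonneg_right hvd' h1m.le
          rwa [div_mul_cancel₀ _ h1m.ne'] at h8
        have e2 : v (q i) ≤ (1 - mi i) * v (qh i) + (2 * L + B) * mi i := by
          have h9 : mi i * v (q i) ≤ mi i * B :=
            mul_le_mul_of_nonneg_left (abs_le.1 hvq).2 (hmi0 i)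
          nlinarith [e1]
        calc w i * v (q i) ≤ w i * ((1 - mi i) * v (qh i) + (2 * L + B) * mi i) :=
            mul_le_mul_of_nonneg_left e2 (hw0 i)
          _ = (w i * (1 - mi i)) * v (qh i) + (2 * L + B) * (w i * mi i) := by ring
      · have h1 : mi i = 1 := le_antisymm (hmi1 i) (not_lt.1 h)
        rw [h1]
        have h2 : v (q i) ≤ B := (abs_le.1 (hB _ (hq i))).2
        have h3 := mul_le_mul_of_nonneg_left h2 (hw0 i)
        nlinarith [hw0 i]
    have hsum := Finset.sum_le_sum (fun i (_ : i ∈ Finset.univ) => hper i)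
    have hvrB : -B ≤ v r := hBlo r hrS
    have hεvr : -(ε * B) ≤ ε * v r := by nlinarith [hε0]
    calc ∑ i, w i * v (q i)
        ≤ ∑ i, ((w i * (1 - mi i)) * v (qh i) + (2 * ↑L + B) * (w i * mi i)) := hsum
      _ = (∑ i, (w i * (1 - mi i)) * v (qh i)) + (2 * ↑L + B) * ε := by
          rw [Finset.sum_add_distrib, ← Finset.mul_sum, hwm]
      _ ≤ crep v p' + (2 * ↑L + 2 * B) * ε := by nlinarith [hle, hεvr, hε0]

lemma cav_concaveOn {v : (K → ℝ) → ℝ} {B : ℝ} (hB : ∀ q ∈ stdSimplex ℝ K, v q ≤ B) :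
    ConcaveOn ℝ (stdSimplex ℝ K) (cav v) := by
  refine ⟨convex_stdSimplex ℝ K, ?_⟩
  intro x hx y hy a b ha hb hab
  have hxy : a • x + b • y ∈ stdSimplex ℝ K := (convex_stdSimplex ℝ K) hx hy ha hb hab
  rw [cav_eq_crep hB hx, cav_eq_crep hB hy, cav_eq_crep hB hxy]
  exact (crep_concave hB).2 hx hy ha hb hab

lemma cav_lipschitz [Nonempty K] {v : (K → ℝ) → ℝ} {L : NNReal}
    (hv : LipschitzOnWith L v (stdSimplex ℝ K)) :
    ∃ C : NNReal, LipschitzOnWith C (cav v) (stdSimplex ℝ K) := by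
  obtain ⟨B, hB⟩ := (isCompact_stdSimplex ℝ K).exists_bound_of_continuousOn hv.continuousOn
  have hB' : ∀ q ∈ stdSimplex ℝ K, |v q| ≤ B := by
    intro q hq; have := hB q hq; rwa [Real.norm_eq_abs] at this
  have hBu : ∀ q ∈ stdSimplex ℝ K, v q ≤ B := fun q hq => (abs_le.1 (hB' q hq)).2
  have hB0 : 0 ≤ B := le_trans (abs_nonneg _) (hB' _ (uniform_mem_stdSimplex (K := K)))
  have hL0 : (0:ℝ) ≤ L := L.coe_nonneg
  set C : ℝ := (2 * L + 2 * B) * (Fintype.card K) with hC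
  have hC0 : 0 ≤ C := by positivity
  refine ⟨⟨C, hC0⟩, LipschitzOnWith.of_dist_le_mul fun x hx y hy => ?_⟩
  have key : ∀ z z', z ∈ stdSimplex ℝ K → z' ∈ stdSimplex ℝ K →
      cav v z - cav v z' ≤ C * dist z z' := by
    intro z z' hz hz'
    have h1 := crep_transport hv hB' hz hz'
    rw [← cav_eq_crep hBu hz, ← cav_eq_crep hBu hz'] at h1
    have h2 : ∑ k, max (z k - z' k) 0 ≤ (Fintype.card K : ℝ) * dist z z' := by
      calc ∑ k, max (z k - z' k) 0 ≤ ∑ _k : K, dist z z' := by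
            refine Finset.sum_le_sum fun k _ => max_le ?_ dist_nonneg
            refine le_trans (le_abs_self _) ?_
            rw [← Real.dist_eq]
            exact dist_le_pi_dist z z' k
        _ = (Fintype.card K : ℝ) * dist z z' := by
            rw [Finset.sum_const, Finset.card_univ, nsmul_eq_mul]
    have h3 := mul_le_mul_of_nonneg_left h2 (by positivity : (0:ℝ) ≤ 2 * L + 2 * B)
    rw [hC, mul_assoc]
    linarith
  rw [Real.dist_eq]
  change |cav v x - cav v y| ≤ C * dist x y
  refine abs_sub_le_iff.2 ⟨key x y hx hy, ?_⟩
  rw [dist_comm]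
  exact key y x hy hx

lemma cav_abs_le [Nonempty K] {v : (K → ℝ) → ℝ} {B : ℝ}
    (hB : ∀ q ∈ stdSimplex ℝ K, |v q| ≤ B) (x : K → ℝ) : |cav v x| ≤ B := by
  have hBu : ∀ q ∈ stdSimplex ℝ K, v q ≤ B := fun q hq => (abs_le.1 (hB q hq)).2
  have hB0 : 0 ≤ B := le_trans (abs_nonneg _) (hB _ (uniform_mem_stdSimplex (K := K)))
  by_cases hx : x ∈ stdSimplex ℝ K
  · have h1 : cav v x ≤ B :=
      cav_le_of_mem hx (concaveOn_const _ (convex_stdSimplex ℝ K)) hBu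
    have h2 : -B ≤ v x := (abs_le.1 (hB x hx)).1
    have h3 := le_cav hBu hx
    exact abs_le.2 ⟨by linarith, h1⟩
  · rw [cav_of_not_mem hBu hx, abs_zero]; exact hB0

lemma cav_measurable [Nonempty K] {v : (K → ℝ) → ℝ} {L : NNReal}
    (hv : LipschitzOnWith L v (stdSimplex ℝ K)) : Measurable (cav v) := by
  classical
  obtain ⟨C, hC⟩ := cav_lipschitz hv
  obtain ⟨g, hg, hEq⟩ := hC.extend_real
  obtain ⟨B, hB⟩ := (isCompact_stdSimplex ℝ K).exists_bound_of_continuousOn hv.continuousOn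
  have hBu : ∀ q ∈ stdSimplex ℝ K, v q ≤ B := by
    intro q hq; have := hB q hq; rw [Real.norm_eq_abs] at this; exact (abs_le.1 this).2
  have heq : cav v = fun x => if x ∈ stdSimplex ℝ K then g x else 0 := by
    funext x
    by_cases hx : x ∈ stdSimplex ℝ K
    · rw [if_pos hx, hEq hx]
    · rw [if_neg hx]; exact cav_of_not_mem hBu hx
  rw [heq]
  exact Measurable.ite (isClosed_stdSimplex ℝ K).measurableSet
    hg.continuous.measurable measurable_const

lemma cav_continuousOn [Nonempty K] {v : (K → ℝ) → ℝ} {L : NNReal}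
    (hv : LipschitzOnWith L v (stdSimplex ℝ K)) :
    ContinuousOn (cav v) (stdSimplex ℝ K) :=
  (cav_lipschitz hv).choose_spec.continuousOn

lemma cav_jensen [Nonempty K] {v : (K → ℝ) → ℝ} {L : NNReal}
    (hv : LipschitzOnWith L v (stdSimplex ℝ K))
    {Ω : Type*} [MeasurableSpace Ω] {μ : MeasureTheory.Measure Ω}
    [MeasureTheory.IsProbabilityMeasure μ]
    {f : Ω → K → ℝ} (hfm : Measurable f) (hfi : MeasureTheory.Integrable f μ)
    (hfs : ∀ᵐ ω ∂μ, f ω ∈ stdSimplex ℝ K) :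
    ∫ ω, cav v (f ω) ∂μ ≤ cav v (∫ ω, f ω ∂μ) := by
  obtain ⟨B, hB⟩ := (isCompact_stdSimplex ℝ K).exists_bound_of_continuousOn hv.continuousOn
  have hB' : ∀ q ∈ stdSimplex ℝ K, |v q| ≤ B := by
    intro q hq; have := hB q hq; rwa [Real.norm_eq_abs] at this
  have hBu : ∀ q ∈ stdSimplex ℝ K, v q ≤ B := fun q hq => (abs_le.1 (hB' q hq)).2
  have hgi : MeasureTheory.Integrable ((cav v) ∘ f) μ := by
    refine MeasureTheory.Integrable.mono' (MeasureTheory.integrable_const B)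
      (((cav_measurable hv).comp hfm).aestronglyMeasurable)
      (MeasureTheory.ae_of_all _ fun ω => ?_)
    rw [Real.norm_eq_abs]
    exact cav_abs_le hB' _
  exact (cav_concaveOn hBu).le_map_integral (cav_continuousOn hv)
    (isClosed_stdSimplex ℝ K) hfs hfi hgi

end CavTheory

noncomputable section MargTheory

open MeasureTheory

variable {KA KB : Type*} [Fintype KA] [Fintype KB]

lemma margA_mem {q : KA × KB → ℝ} (hq : q ∈ stdSimplex ℝ (KA × KB)) :
    margA q ∈ stdSimplex ℝ KA := by
  constructor
  · intro a; exact Finset.sum_nonneg fun b _ => hq.1 (a, b)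
  · have h1 : ∑ a, margA q a = ∑ x : KA × KB, q x := by
      rw [Fintype.sum_prod_type]; rfl
    rw [h1, hq.2]

lemma margB_mem {q : KA × KB → ℝ} (hq : q ∈ stdSimplex ℝ (KA × KB)) :
    margB q ∈ stdSimplex ℝ KB := by
  constructor
  · intro b; exact Finset.sum_nonneg fun a _ => hq.1 (a, b)
  · have h1 : ∑ b, margB q b = ∑ x : KA × KB, q x := by
      rw [Fintype.sum_prod_type_right]; rfl
    rw [h1, hq.2]

def margACLM (KA KB : Type*) [Fintype KA] [Fintype KB] :
    ((KA × KB) → ℝ) →L[ℝ] (KA → ℝ) :=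
  LinearMap.toContinuousLinearMap
    { toFun := margA
      map_add' := fun x y => funext fun a => by
        simp [margA, Finset.sum_add_distrib]
      map_smul' := fun c x => funext fun a => by
        simp [margA, Finset.mul_sum] }

def margBCLM (KA KB : Type*) [Fintype KA] [Fintype KB] :
    ((KA × KB) → ℝ) →L[ℝ] (KB → ℝ) :=
  LinearMap.toContinuousLinearMap
    { toFun := margB
      map_add' := fun x y => funext fun b => by
        simp [margB, Finset.sum_add_distrib]
      map_smul' := fun c x => funext fun b => by
        simp [margB, Finset.mul_sum] }

lemma margACLM_coe : ⇑(margACLM KA KB) = margA := rfl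

lemma margBCLM_coe : ⇑(margBCLM KA KB) = margB := rfl

lemma martingale_integral_eq {Ω : Type*} {mΩ : MeasurableSpace Ω} {μ : Measure Ω}
    [IsFiniteMeasure μ] {E : Type*} [NormedAddCommGroup E] [NormedSpace ℝ E] [CompleteSpace E]
    {ℱ : Filtration ℕ mΩ} {f : ℕ → Ω → E} (hf : Martingale f ℱ μ) {s t : ℕ} (h : s ≤ t) :
    ∫ ω, f s ω ∂μ = ∫ ω, f t ω ∂μ := by
  have h2 := hf.condExp_ae_eq h
  calc ∫ ω, f s ω ∂μ = ∫ ω, (μ[f t|ℱ s]) ω ∂μ := (integral_congr_ae h2).symm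
    _ = ∫ ω, f t ω ∂μ := integral_condExp (ℱ.le s)

end MargTheory


/-- if `(p_t)` is a `Δ(K_A×K_B)`-valued martingale with `p₁ = p⁰` a.s.,
and `(β_{A,t})`, `(β_{B,t})` are real martingales with `β_{ℓ,t} ≤ Cav(v_ℓ)((p_t)_ℓ)` a.s.
and `β_{A,1} + β_{B,1} = Cav(v_A)(p⁰_A) + Cav(v_B)(p⁰_B)` a.s., then each process
`Cav(v_ℓ)((p_t)_ℓ)` is a martingale. -/
theorem stmt_6 {KA KB : Type*} [Fintype KA] [Fintype KB]
    {Ω : Type*} {mΩ : MeasurableSpace Ω} {μ : Measure Ω} [IsProbabilityMeasure μ]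
    (ℱ : Filtration ℕ mΩ)
    (vA : (KA → ℝ) → ℝ) (vB : (KB → ℝ) → ℝ) (CA CB : NNReal)
    (hvA : LipschitzOnWith CA vA (stdSimplex ℝ KA))
    (hvB : LipschitzOnWith CB vB (stdSimplex ℝ KB))
    (p : ℕ → Ω → (KA × KB → ℝ)) (hmart : Martingale p ℱ μ)
    (hval : ∀ t, ∀ᵐ ω ∂μ, p t ω ∈ stdSimplex ℝ (KA × KB))
    (p0 : KA × KB → ℝ) (hp0 : p0 ∈ stdSimplex ℝ (KA × KB))
    (hinit : ∀ᵐ ω ∂μ, p 1 ω = p0)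
    (βA βB : ℕ → Ω → ℝ)
    (hβA : Martingale βA ℱ μ) (hβB : Martingale βB ℱ μ)
    (hAle : ∀ t, ∀ᵐ ω ∂μ, βA t ω ≤ cav vA (margA (p t ω)))
    (hBle : ∀ t, ∀ᵐ ω ∂μ, βB t ω ≤ cav vB (margB (p t ω)))
    (hsum : ∀ᵐ ω ∂μ, βA 1 ω + βB 1 ω = cav vA (margA p0) + cav vB (margB p0)) :
    Martingale (fun t ω => cav vA (margA (p t ω))) ℱ μ ∧
    Martingale (fun t ω => cav vB (margB (p t ω))) ℱ μ := by
  -- nonemptiness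
  have hne : Nonempty (KA × KB) := by
    by_contra h
    rw [not_nonempty_iff] at h
    have h2 := hp0.2
    rw [Finset.univ_eq_empty, Finset.sum_empty] at h2
    exact one_ne_zero h2.symm
  haveI hKA : Nonempty KA := ⟨hne.some.1⟩
  haveI hKB : Nonempty KB := ⟨hne.some.2⟩
  -- bounds
  obtain ⟨BA, hBA0⟩ := (isCompact_stdSimplex ℝ KA).exists_bound_of_continuousOn hvA.continuousOn
  have hBA : ∀ q ∈ stdSimplex ℝ KA, |vA q| ≤ BA := fun q hq => by
    have := hBA0 q hq; rwa [Real.norm_eq_abs] at this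
  obtain ⟨BB, hBB0⟩ := (isCompact_stdSimplex ℝ KB).exists_bound_of_continuousOn hvB.continuousOn
  have hBB : ∀ q ∈ stdSimplex ℝ KB, |vB q| ≤ BB := fun q hq => by
    have := hBB0 q hq; rwa [Real.norm_eq_abs] at this
  -- basic measurability/integrability
  have hpt_int : ∀ t, Integrable (p t) μ := hmart.integrable
  have hfA_meas : ∀ t, Measurable[ℱ t] fun ω => margA (p t ω) := fun t =>
    ((margACLM KA KB).continuous.measurable).comp (hmart.stronglyAdapted t).measurable
  have hfB_meas : ∀ t, Measurable[ℱ t] fun ω => margB (p t ω) := fun t =>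
    ((margBCLM KA KB).continuous.measurable).comp (hmart.stronglyAdapted t).measurable
  have hXA_meas : ∀ t, Measurable[ℱ t] fun ω => cav vA (margA (p t ω)) := fun t =>
    (cav_measurable hvA).comp (hfA_meas t)
  have hXB_meas : ∀ t, Measurable[ℱ t] fun ω => cav vB (margB (p t ω)) := fun t =>
    (cav_measurable hvB).comp (hfB_meas t)
  have hXA_int : ∀ t, Integrable (fun ω => cav vA (margA (p t ω))) μ := fun t =>
    Integrable.mono' (integrable_const BA)
      (((hXA_meas t).mono (ℱ.le t) le_rfl).aestronglyMeasurable)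
      (ae_of_all _ fun ω => by rw [Real.norm_eq_abs]; exact cav_abs_le hBA _)
  have hXB_int : ∀ t, Integrable (fun ω => cav vB (margB (p t ω))) μ := fun t =>
    Integrable.mono' (integrable_const BB)
      (((hXB_meas t).mono (ℱ.le t) le_rfl).aestronglyMeasurable)
      (ae_of_all _ fun ω => by rw [Real.norm_eq_abs]; exact cav_abs_le hBB _)
  -- means
  have h1mean : ∫ ω, p 1 ω ∂μ = p0 := by
    rw [integral_congr_ae hinit]
    simp
  have hmean : ∀ t, ∫ ω, p t ω ∂μ = p0 := by
    intro t
    rcases le_total t 1 with h|h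
    · rw [martingale_integral_eq hmart h, h1mean]
    · rw [← martingale_integral_eq hmart h, h1mean]
  have hfA_int : ∀ t, Integrable (fun ω => margA (p t ω)) μ := fun t =>
    (margACLM KA KB).integrable_comp (hpt_int t)
  have hfB_int : ∀ t, Integrable (fun ω => margB (p t ω)) μ := fun t =>
    (margBCLM KA KB).integrable_comp (hpt_int t)
  have hmeanA : ∀ t, ∫ ω, margA (p t ω) ∂μ = margA p0 := fun t => by
    have h2 := (margACLM KA KB).integral_comp_comm (hpt_int t)
    rw [hmean t] at h2
    exact h2
  have hmeanB : ∀ t, ∫ ω, margB (p t ω) ∂μ = margB p0 := fun t => by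
    have h2 := (margBCLM KA KB).integral_comp_comm (hpt_int t)
    rw [hmean t] at h2
    exact h2
  -- Jensen
  have hJA : ∀ t, ∫ ω, cav vA (margA (p t ω)) ∂μ ≤ cav vA (margA p0) := fun t => by
    have h2 := cav_jensen hvA (f := fun ω => margA (p t ω))
      ((hfA_meas t).mono (ℱ.le t) le_rfl) (hfA_int t)
      ((hval t).mono fun ω h => margA_mem h)
    rwa [hmeanA t] at h2
  have hJB : ∀ t, ∫ ω, cav vB (margB (p t ω)) ∂μ ≤ cav vB (margB p0) := fun t => by
    have h2 := cav_jensen hvB (f := fun ω => margB (p t ω))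
      ((hfB_meas t).mono (ℱ.le t) le_rfl) (hfB_int t)
      ((hval t).mono fun ω h => margB_mem h)
    rwa [hmeanB t] at h2
  -- the β side
  have hβA_mean : ∀ t, ∫ ω, βA t ω ∂μ = ∫ ω, βA 1 ω ∂μ := by
    intro t
    rcases le_total t 1 with h|h
    · exact martingale_integral_eq hβA h
    · exact (martingale_integral_eq hβA h).symm
  have hβB_mean : ∀ t, ∫ ω, βB t ω ∂μ = ∫ ω, βB 1 ω ∂μ := by
    intro t
    rcases le_total t 1 with h|h
    · exact martingale_integral_eq hβB h
    · exact (martingale_integral_eq hβB h).symm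
  have hsum1 : ∫ ω, βA 1 ω ∂μ + ∫ ω, βB 1 ω ∂μ
      = cav vA (margA p0) + cav vB (margB p0) := by
    rw [← integral_add (hβA.integrable 1) (hβB.integrable 1), integral_congr_ae hsum]
    simp
  -- sandwich: a.e. equality at every time
  have hXeq : ∀ t, ((fun ω => cav vA (margA (p t ω))) =ᵐ[μ] βA t)
      ∧ ((fun ω => cav vB (margB (p t ω))) =ᵐ[μ] βB t) := by
    intro t
    have hDA_nonneg : 0 ≤ᵐ[μ] fun ω => cav vA (margA (p t ω)) - βA t ω :=
      (hAle t).mono fun ω h => sub_nonneg.2 h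
    have hDB_nonneg : 0 ≤ᵐ[μ] fun ω => cav vB (margB (p t ω)) - βB t ω :=
      (hBle t).mono fun ω h => sub_nonneg.2 h
    have hDA_int : Integrable (fun ω => cav vA (margA (p t ω)) - βA t ω) μ :=
      (hXA_int t).sub (hβA.integrable t)
    have hDB_int : Integrable (fun ω => cav vB (margB (p t ω)) - βB t ω) μ :=
      (hXB_int t).sub (hβB.integrable t)
    have hIA : ∫ ω, (cav vA (margA (p t ω)) - βA t ω) ∂μ
        = ∫ ω, cav vA (margA (p t ω)) ∂μ - ∫ ω, βA t ω ∂μ :=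
      integral_sub (hXA_int t) (hβA.integrable t)
    have hIB : ∫ ω, (cav vB (margB (p t ω)) - βB t ω) ∂μ
        = ∫ ω, cav vB (margB (p t ω)) ∂μ - ∫ ω, βB t ω ∂μ :=
      integral_sub (hXB_int t) (hβB.integrable t)
    have h0A : 0 ≤ ∫ ω, (cav vA (margA (p t ω)) - βA t ω) ∂μ :=
      integral_nonneg_of_ae hDA_nonneg
    have h0B : 0 ≤ ∫ ω, (cav vB (margB (p t ω)) - βB t ω) ∂μ :=
      integral_nonneg_of_ae hDB_nonneg
    have hA0 : ∫ ω, (cav vA (margA (p t ω)) - βA t ω) ∂μ = 0 := by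
      have hja := hJA t
      have hjb := hJB t
      have hba := hβA_mean t
      have hbb := hβB_mean t
      rw [hIA]
      rw [hIA, hIB] at *
      linarith [h0A, h0B]
    have hB0 : ∫ ω, (cav vB (margB (p t ω)) - βB t ω) ∂μ = 0 := by
      have hja := hJA t
      have hjb := hJB t
      have hba := hβA_mean t
      have hbb := hβB_mean t
      rw [hIB]
      linarith [h0A, h0B, hIA]
    constructor
    · have := (integral_eq_zero_iff_of_nonneg_ae hDA_nonneg hDA_int).1 hA0
      exact this.mono fun ω h => sub_eq_zero.1 h
    · have := (integral_eq_zero_iff_of_nonneg_ae hDB_nonneg hDB_int).1 hB0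
      exact this.mono fun ω h => sub_eq_zero.1 h
  constructor
  · refine ⟨fun t => (hXA_meas t).stronglyMeasurable, fun i j hij => ?_⟩
    calc μ[(fun ω => cav vA (margA (p j ω)))|ℱ i]
        =ᵐ[μ] μ[βA j|ℱ i] := condExp_congr_ae (hXeq j).1
      _ =ᵐ[μ] βA i := hβA.2 i j hij
      _ =ᵐ[μ] fun ω => cav vA (margA (p i ω)) := ((hXeq i).1).symm
  · refine ⟨fun t => (hXB_meas t).stronglyMeasurable, fun i j hij => ?_⟩
    calc μ[(fun ω => cav vB (margB (p j ω)))|ℱ i]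
        =ᵐ[μ] μ[βB j|ℱ i] := condExp_congr_ae (hXeq j).2
      _ =ᵐ[μ] βB i := hβB.2 i j hij
      _ =ᵐ[μ] fun ω => cav vB (margB (p i ω)) := ((hXeq i).2).symm
end
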